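/- arXiv:1201.3953 — 5 statements merged into one kernel-verified Lean document; each statement's English description precedes it below -/
import Mathlib

section
/- Let p₁ ≤ p₂ be probabilities in [0,1], and consider bond percolation on a finite graph G coupled simultaneously via i.i.d. uniform [0,1] edge labels (an edge is p-open iff its label is ≤ p). Then for any vertex v and integer r > 0, the probability under p₂ that the intrinsic-metric ball boundary ∂B_v(r) is nonempty is at most (p₂/p₁)^r times the probability under p₁ that ∂B_v(r) is nonempty. -/
open Classical

noncomputable section

/-- Two vertices are joined by an edge of `G` that is open in the configuration `ω`. -/
def OpenAdj {V : Type*} (G : SimpleGraph V) (ω : Sym2 V → Bool) (x y : V) : Prop :=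
  G.Adj x y ∧ ω s(x, y) = true

/-- `x` and `y` are connected by an open path with at most `r` edges. -/
def ConnWithin {V : Type*} (G : SimpleGraph V) (ω : Sym2 V → Bool) (x y : V) (r : ℕ) : Prop :=
  ∃ l : List V, List.Chain (OpenAdj G ω) x l ∧
    (x :: l).getLast (List.cons_ne_nil x l) = y ∧ l.length ≤ r

/-- The intrinsic (open-path) distance from `x` to `y` equals `r`. -/
def DistEq {V : Type*} (G : SimpleGraph V) (ω : Sym2 V → Bool) (x y : V) (r : ℕ) : Prop :=
  ConnWithin G ω x y r ∧ ∀ s < r, ¬ ConnWithin G ω x y s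

/-- The boundary `∂B_x(r)` of the intrinsic ball of radius `r` around `x` is nonempty. -/
def SphereNonempty {V : Type*} (G : SimpleGraph V) (ω : Sym2 V → Bool) (x : V) (r : ℕ) : Prop :=
  ∃ y, DistEq G ω x y r

/-- The Bernoulli product weight of a single percolation configuration. -/
def edgeWeight {V : Type*} [Fintype V] [DecidableEq V] (p : ℝ) (ω : Sym2 V → Bool) : ℝ :=
  ∏ e : Sym2 V, if ω e then p else 1 - p

/-- The probability of the event `S` under bond percolation with parameter `p`. -/
def percProb {V : Type*} [Fintype V] [DecidableEq V] (p : ℝ) (S : Set (Sym2 V → Bool)) : ℝ :=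
  ∑ ω : Sym2 V → Bool, if ω ∈ S then edgeWeight p ω else 0

/-- Expectation under bond percolation with parameter `p`. -/
def percExp {V : Type*} [Fintype V] [DecidableEq V] (p : ℝ) (f : (Sym2 V → Bool) → ℝ) : ℝ :=
  ∑ ω : Sym2 V → Bool, edgeWeight p ω * f ω

/-! ### Auxiliary machinery for the coupling proof -/

/-- The list of edges traversed by the walk `x :: l`. -/
def edgeList {V : Type*} (x : V) (l : List V) : List (Sym2 V) :=
  List.zipWith (fun a b => s(a,b)) (x :: l) l

lemma chain_openAdj_iff {V : Type*} (G : SimpleGraph V) (ω : Sym2 V → Bool) (x : V) (l : List V) :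
    List.Chain (OpenAdj G ω) x l ↔
      List.Chain G.Adj x l ∧ ∀ e ∈ edgeList x l, ω e = true := by
  induction l generalizing x with
  | nil => simp [edgeList, List.Chain]
  | cons a l ih =>
    simp only [List.Chain] at ih ⊢
    simp only [List.isChain_cons_cons, ih, edgeList, List.zipWith, OpenAdj, List.mem_cons]
    constructor
    · rintro ⟨⟨h1, h2⟩, h3, h4⟩
      exact ⟨⟨h1, h3⟩, fun e he => by rcases he with rfl | he; exact h2; exact h4 e he⟩
    · rintro ⟨⟨h1, h3⟩, h4⟩
      exact ⟨⟨h1, h4 _ (Or.inl rfl)⟩, h3, fun e he => h4 e (Or.inr he)⟩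

lemma edgeList_length {V : Type*} (x : V) (l : List V) : (edgeList x l).length = l.length := by
  simp [edgeList]

lemma connWithin_mono {V : Type*} (G : SimpleGraph V) {ω η : Sym2 V → Bool}
    (h : ∀ e, η e = true → ω e = true) {x y : V} {s : ℕ} :
    ConnWithin G η x y s → ConnWithin G ω x y s := by
  rintro ⟨l, hc, hl, hlen⟩
  rw [chain_openAdj_iff] at hc
  exact ⟨l, (chain_openAdj_iff G ω x l).2 ⟨hc.1, fun e he => h e (hc.2 e he)⟩, hl, hlen⟩

/-- The coupling kernel of the monotone coupling of `p₁`- and `p₂`-percolation. -/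
def kern (p₁ p₂ : ℝ) (a b : Bool) : ℝ :=
  if b then (if a then p₁ else 0) else (if a then p₂ - p₁ else 1 - p₂)

lemma kern_nonneg {p₁ p₂ : ℝ} (h0 : 0 ≤ p₁) (h12 : p₁ ≤ p₂) (h2 : p₂ ≤ 1) (a b : Bool) :
    0 ≤ kern p₁ p₂ a b := by
  cases a <;> cases b <;> simp [kern] <;> linarith

lemma sum_prod_bool {ι : Type*} [Fintype ι] [DecidableEq ι] (F : ι → Bool → ℝ) :
    ∑ η : ι → Bool, ∏ e, F e (η e) = ∏ e, ∑ b, F e b := by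
  rw [Finset.prod_univ_sum, Fintype.piFinset_univ]

/-- **Coupling monotonicity of intrinsic spheres (probabilities).**  For `0 < p₁ ≤ p₂ ≤ 1`
and any vertex `v` and integer `r > 0`, the probability under `p₂`-percolation that
`∂B_v(r) ≠ ∅` is at most `(p₂/p₁)^r` times the probability under `p₁`-percolation. -/
theorem sphere_nonempty_prob_comparison {V : Type*} [Fintype V] [DecidableEq V]
    (G : SimpleGraph V) (p₁ p₂ : ℝ) (hp₁ : 0 < p₁) (h₁₂ : p₁ ≤ p₂) (hp₂ : p₂ ≤ 1)
    (v : V) (r : ℕ) (hr : 0 < r) :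
    percProb p₂ {ω | SphereNonempty G ω v r}
      ≤ (p₂ / p₁) ^ r * percProb p₁ {ω | SphereNonempty G ω v r} := by
  classical
  have hp₂pos : 0 < p₂ := lt_of_lt_of_le hp₁ h₁₂
  -- the witness edge set
  set P : (Sym2 V → Bool) → Finset (Sym2 V) := fun ω =>
    if h : SphereNonempty G ω v r then
      (edgeList v (Classical.choose (Classical.choose_spec h).1)).toFinset
    else ∅ with hP
  have keyP : ∀ ω : Sym2 V → Bool, ∀ h : SphereNonempty G ω v r,
      (∀ e ∈ P ω, ω e = true) ∧ (P ω).card ≤ r ∧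
      (∀ η : Sym2 V → Bool, (∀ e ∈ P ω, η e = true) → (∀ e, η e = true → ω e = true) →
        SphereNonempty G η v r) := by
    intro ω h
    have hdist : DistEq G ω v (Classical.choose h) r := Classical.choose_spec h
    set y := Classical.choose h with hy
    set l := Classical.choose (Classical.choose_spec h).1 with hl
    have hspec := Classical.choose_spec (Classical.choose_spec h).1
    obtain ⟨hchain, hlast, hlen⟩ := hspec
    have hPω : P ω = (edgeList v l).toFinset := by rw [hP]; simp only [dif_pos h]; rfl
    have hopen : ∀ e ∈ edgeList v l, ω e = true := ((chain_openAdj_iff G ω v l).1 hchain).2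
    refine ⟨?_, ?_, ?_⟩
    · intro e he; rw [hPω, List.mem_toFinset] at he; exact hopen e he
    · rw [hPω]
      calc (edgeList v l).toFinset.card ≤ (edgeList v l).length := (edgeList v l).toFinset_card_le
        _ = l.length := edgeList_length v l
        _ ≤ r := hlen
    · intro η hη hsub
      refine ⟨y, ⟨l, ?_, hlast, hlen⟩, fun s hs hc => hdist.2 s hs (connWithin_mono G hsub hc)⟩
      refine (chain_openAdj_iff G η v l).2 ⟨((chain_openAdj_iff G ω v l).1 hchain).1, ?_⟩
      intro e he
      exact hη e (by rw [hPω, List.mem_toFinset]; exact he)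
  set A : Set (Sym2 V → Bool) := {ω | SphereNonempty G ω v r} with hA
  set W : (Sym2 V → Bool) → (Sym2 V → Bool) → ℝ :=
    fun ω η => ∏ e, kern p₁ p₂ (ω e) (η e) with hW
  have hWnn : ∀ ω η, 0 ≤ W ω η := fun ω η =>
    Finset.prod_nonneg fun e _ => kern_nonneg hp₁.le h₁₂ hp₂ _ _
  -- restricted sum over η with P ω ⊆ η
  set S : (Sym2 V → Bool) → ℝ :=
    fun ω => ∑ η : Sym2 V → Bool, if ∀ e ∈ P ω, η e = true then W ω η else 0 with hS
  have hSnn : ∀ ω, 0 ≤ S ω := fun ω =>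
    Finset.sum_nonneg fun η _ => by
      by_cases hh : ∀ e ∈ P ω, η e = true
      · rw [if_pos hh]; exact hWnn ω η
      · rw [if_neg hh]
  -- Step A : S ω = ∏ e, if e ∈ P ω then p₁ else (if ω e then p₂ else 1 - p₂), when ω ∈ A
  have stepA : ∀ ω ∈ A, S ω = ∏ e, if e ∈ P ω then p₁ else (if ω e then p₂ else 1 - p₂) := by
    intro ω hω
    obtain ⟨hopen, -, -⟩ := keyP ω hω
    have : S ω = ∑ η : Sym2 V → Bool, ∏ e,
        (fun e b => if e ∈ P ω then (if b then kern p₁ p₂ (ω e) true else 0)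
          else kern p₁ p₂ (ω e) b) e (η e) := by
      apply Finset.sum_congr rfl
      intro η _
      by_cases hh : ∀ e ∈ P ω, η e = true
      · rw [if_pos hh]
        apply Finset.prod_congr rfl
        intro e _
        by_cases heP : e ∈ P ω
        · simp only [heP, if_pos, hh e heP]
        · simp [heP]
      · rw [if_neg hh]
        push_neg at hh
        obtain ⟨e₀, he₀, he₀f⟩ := hh
        refine (Finset.prod_eq_zero (Finset.mem_univ e₀) ?_).symm
        simp only [he₀, if_pos]
        rw [if_neg he₀f]
    rw [this, sum_prod_bool (fun e b => if e ∈ P ω then (if b then kern p₁ p₂ (ω e) true else 0)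
      else kern p₁ p₂ (ω e) b)]
    apply Finset.prod_congr rfl
    intro e _
    by_cases heP : e ∈ P ω
    · simp [heP, Fintype.sum_bool, kern, hopen e heP]
    · simp [heP, Fintype.sum_bool, kern]
      cases hc : ω e <;> simp <;> ring
  -- Step B : edgeWeight p₂ ω ≤ (p₂/p₁)^r * S ω for ω ∈ A
  have stepB : ∀ ω ∈ A, edgeWeight p₂ ω ≤ (p₂ / p₁) ^ r * S ω := by
    intro ω hω
    obtain ⟨hopen, hcard, -⟩ := keyP ω hω
    set c := (P ω).card with hc
    have hEW : edgeWeight p₂ ω = ∏ e, (if e ∈ P ω then p₂ else (if ω e then p₂ else 1 - p₂)) := by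
      unfold edgeWeight
      apply Finset.prod_congr rfl
      intro e _
      by_cases heP : e ∈ P ω
      · simp [heP, hopen e heP]
      · simp [heP]
    have hsplit : ∀ q : ℝ, (∏ e, (if e ∈ P ω then q else (if ω e then p₂ else 1 - p₂)))
        = q ^ c * ∏ e ∈ (P ω)ᶜ, (if ω e then p₂ else 1 - p₂) := by
      intro q
      rw [← Finset.prod_mul_prod_compl (P ω)]
      congr 1
      · rw [Finset.prod_congr rfl (fun e he => if_pos he), Finset.prod_const, hc]
      · exact Finset.prod_congr rfl fun e he => if_neg (Finset.mem_compl.1 he)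
    have hSval : S ω = p₁ ^ c * ∏ e ∈ (P ω)ᶜ, (if ω e then p₂ else 1 - p₂) := by
      rw [stepA ω hω, hsplit p₁]
    have hEW2 : edgeWeight p₂ ω = p₂ ^ c * ∏ e ∈ (P ω)ᶜ, (if ω e then p₂ else 1 - p₂) := by
      rw [hEW, hsplit p₂]
    have hprodnn : 0 ≤ ∏ e ∈ (P ω)ᶜ, (if ω e then p₂ else 1 - p₂) :=
      Finset.prod_nonneg fun e _ => by by_cases h : ω e <;> simp [h] <;> linarith
    rw [hEW2, hSval]
    have h1 : (p₂ / p₁) ^ r * (p₁ ^ c * ∏ e ∈ (P ω)ᶜ, (if ω e then p₂ else 1 - p₂))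
        = ((p₂ / p₁) ^ r * p₁ ^ c) * ∏ e ∈ (P ω)ᶜ, (if ω e then p₂ else 1 - p₂) := by ring
    rw [h1]
    apply mul_le_mul_of_nonneg_right _ hprodnn
    have hratio : (1 : ℝ) ≤ p₂ / p₁ := (one_le_div hp₁).2 h₁₂
    calc p₂ ^ c = (p₂ / p₁) ^ c * p₁ ^ c := by
          rw [div_pow, div_mul_cancel₀]
          exact pow_ne_zero _ (ne_of_gt hp₁)
      _ ≤ (p₂ / p₁) ^ r * p₁ ^ c := by
          apply mul_le_mul_of_nonneg_right (pow_le_pow_right₀ hratio hcard)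
          positivity
  -- Step C : termwise comparison of double sums
  have stepC : ∀ ω η : Sym2 V → Bool,
      (if ω ∈ A then (if ∀ e ∈ P ω, η e = true then W ω η else 0) else 0)
        ≤ (if η ∈ A then W ω η else 0) := by
    intro ω η
    by_cases hω : ω ∈ A
    · rw [if_pos hω]
      by_cases hη : ∀ e ∈ P ω, η e = true
      · rw [if_pos hη]
        by_cases hWz : W ω η = 0
        · rw [hWz]; by_cases h : η ∈ A <;> simp [h, hWz, hWnn ω η]
        · have hsub : ∀ e, η e = true → ω e = true := by
            intro e he
            by_contra hne
            apply hWz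
            refine Finset.prod_eq_zero (Finset.mem_univ e) ?_
            rw [Bool.not_eq_true] at hne
            rw [hne, he]
            simp [kern]
          have : η ∈ A := (keyP ω hω).2.2 η hη hsub
          rw [if_pos this]
      · rw [if_neg hη]
        by_cases h : η ∈ A <;> simp [h, hWnn ω η]
    · rw [if_neg hω]
      by_cases h : η ∈ A <;> simp [h, hWnn ω η]
  -- Marginal of W in ω is the p₁ weight
  have marg : ∀ η : Sym2 V → Bool, (∑ ω : Sym2 V → Bool, W ω η) = edgeWeight p₁ η := by
    intro η
    have : (∑ ω : Sym2 V → Bool, W ω η)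
        = ∑ ω : Sym2 V → Bool, ∏ e, (fun e b => kern p₁ p₂ b (η e)) e (ω e) := rfl
    rw [this, sum_prod_bool (fun e b => kern p₁ p₂ b (η e))]
    unfold edgeWeight
    apply Finset.prod_congr rfl
    intro e _
    rw [Fintype.sum_bool]
    cases h : η e <;> simp [kern, h] <;> ring
  -- put everything together
  have main : percProb p₂ A ≤ (p₂ / p₁) ^ r * ∑ ω : Sym2 V → Bool, (if ω ∈ A then S ω else 0) := by
    unfold percProb
    rw [Finset.mul_sum]
    apply Finset.sum_le_sum
    intro ω _
    by_cases hω : ω ∈ A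
    · simp only [if_pos hω]
      exact stepB ω hω
    · simp [hω]
  have main2 : (∑ ω : Sym2 V → Bool, (if ω ∈ A then S ω else 0)) ≤ percProb p₁ A := by
    have lhs_eq : (∑ ω : Sym2 V → Bool, (if ω ∈ A then S ω else 0))
        = ∑ ω : Sym2 V → Bool, ∑ η : Sym2 V → Bool,
            (if ω ∈ A then (if ∀ e ∈ P ω, η e = true then W ω η else 0) else 0) := by
      apply Finset.sum_congr rfl
      intro ω _
      by_cases hω : ω ∈ A <;> simp [hω, hS]
    have rhs_eq : percProb p₁ A = ∑ ω : Sym2 V → Bool, ∑ η : Sym2 V → Bool,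
        (if η ∈ A then W ω η else 0) := by
      rw [Finset.sum_comm]
      unfold percProb
      apply Finset.sum_congr rfl
      intro η _
      by_cases hη : η ∈ A
      · rw [if_pos hη, ← marg η]
        apply Finset.sum_congr rfl
        intro ω _
        rw [if_pos hη]
      · rw [if_neg hη]
        symm
        apply Finset.sum_eq_zero
        intro ω _
        rw [if_neg hη]
    rw [lhs_eq, rhs_eq]
    exact Finset.sum_le_sum fun ω _ => Finset.sum_le_sum fun η _ => stepC ω η
  calc percProb p₂ A ≤ (p₂ / p₁) ^ r * ∑ ω : Sym2 V → Bool, (if ω ∈ A then S ω else 0) := main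
    _ ≤ (p₂ / p₁) ^ r * percProb p₁ A :=
        mul_le_mul_of_nonneg_left main2 (by positivity)

end
end

section
/- Let G be a finite transitive graph and define p_c by E_{p_c}|C(0)| = λ V^{1/3} for a fixed λ > 0. Then there exists ξ > 0 (depending on λ) such that for all integers r ≤ ξ V^{1/3}, the expected intrinsic ball size at criticality satisfies E_{p_c}|B(r)| ≥ r/4. -/
open Classical

noncomputable section

set_option maxHeartbeats 1000000

/-- `x` and `y` are connected by an open path. -/
def Conn {V : Type*} (G : SimpleGraph V) (ω : Sym2 V → Bool) (x y : V) : Prop :=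
  Relation.ReflTransGen (OpenAdj G ω) x y

/-- The size of the open cluster of `x`: `|C(x)|`. -/
def clusterSize {V : Type*} (G : SimpleGraph V) (ω : Sym2 V → Bool) (x : V) : ℕ :=
  Nat.card {y : V // Conn G ω x y}

/-- The size of the intrinsic ball of radius `r` around `x`: `|B_x(r)|`. -/
def ballSize {V : Type*} (G : SimpleGraph V) (ω : Sym2 V → Bool) (x : V) (r : ℕ) : ℕ :=
  Nat.card {y : V // ConnWithin G ω x y r}

/-! ### Infrastructure -/

namespace Perc

variable {V : Type*} (G : SimpleGraph V) (ω : Sym2 V → Bool)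

/-- The subgraph of open edges. -/
def openG : SimpleGraph V where
  Adj x y := OpenAdj G ω x y
  symm := by
    constructor
    intro x y ⟨h1, h2⟩
    exact ⟨h1.symm, by rwa [Sym2.eq_swap] at h2⟩
  loopless := by constructor; intro x ⟨h1, _⟩; exact G.loopless.irrefl x h1

variable {G} {ω}

theorem chain_of_walk {x y : V} (p : (openG G ω).Walk x y) :
    ∃ l : List V, List.Chain (OpenAdj G ω) x l ∧
      (x :: l).getLast (List.cons_ne_nil x l) = y ∧ l.length = p.length := by
  induction p with
  | nil => exact ⟨[], by simp [List.Chain], by simp, by simp⟩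
  | @cons u v w h q ih =>
    obtain ⟨l, hc, hlast, hlen⟩ := ih
    refine ⟨v :: l, List.chain_cons.2 ⟨h, hc⟩, ?_, by simp [hlen]⟩
    rwa [List.getLast_cons (List.cons_ne_nil v l)]

theorem connWithin_iff_walk {x y : V} {r : ℕ} :
    ConnWithin G ω x y r ↔ ∃ p : (openG G ω).Walk x y, p.length ≤ r := by
  constructor
  · rintro ⟨l, hc, hlast, hlen⟩
    induction l generalizing x r with
    | nil =>
      simp at hlast
      subst hlast
      exact ⟨SimpleGraph.Walk.nil, by simp⟩
    | cons b l ih =>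
      rw [List.Chain, List.chain_cons] at hc
      have hlast' : (b :: l).getLast (List.cons_ne_nil b l) = y := by
        rwa [List.getLast_cons (List.cons_ne_nil b l)] at hlast
      have hlen' : l.length ≤ r - 1 := by
        simp only [List.length_cons] at hlen; omega
      obtain ⟨p, hp⟩ := ih hc.2 hlast' hlen'
      refine ⟨SimpleGraph.Walk.cons (show (openG G ω).Adj x b from hc.1) p, ?_⟩
      rw [SimpleGraph.Walk.length_cons]
      simp only [List.length_cons] at hlen
      omega
  · rintro ⟨p, hp⟩
    obtain ⟨l, hc, hlast, hlen⟩ := chain_of_walk p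
    exact ⟨l, hc, hlast, hlen ▸ hp⟩

theorem connWithin_refl {x : V} {r : ℕ} : ConnWithin G ω x x r :=
  ⟨[], by simp [List.Chain], by simp, by simp⟩

theorem connWithin_zero {x y : V} : ConnWithin G ω x y 0 ↔ y = x := by
  constructor
  · rw [connWithin_iff_walk]
    rintro ⟨p, hp⟩
    have := SimpleGraph.Walk.eq_of_length_eq_zero (Nat.le_zero.1 hp)
    exact this.symm
  · rintro rfl; exact connWithin_refl

theorem _root_.ConnWithin.mono_r {x y : V} {r r' : ℕ} (h : r ≤ r') (hc : ConnWithin G ω x y r) :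
    ConnWithin G ω x y r' := by
  obtain ⟨l, h1, h2, h3⟩ := hc
  exact ⟨l, h1, h2, h3.trans h⟩

theorem _root_.ConnWithin.mono_omega {ω' : Sym2 V → Bool} (hω : ∀ e, ω e = true → ω' e = true)
    {x y : V} {r : ℕ} (hc : ConnWithin G ω x y r) : ConnWithin G ω' x y r := by
  obtain ⟨l, h1, h2, h3⟩ := hc
  exact ⟨l, List.IsChain.imp (fun a b ⟨ha, hb⟩ => ⟨ha, hω _ hb⟩) h1, h2, h3⟩

/-- Peel the last edge off a connection. -/
theorem connWithin_peel {x y : V} {r : ℕ} (h : ConnWithin G ω x y (r + 1)) :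
    y = x ∨ ∃ u, ConnWithin G ω x u r ∧ OpenAdj G ω u y := by
  rw [connWithin_iff_walk] at h
  obtain ⟨p, hp⟩ := h
  cases hrev : p.reverse with
  | nil =>
    left
    have hl : p.length = 0 := by
      rw [← SimpleGraph.Walk.length_reverse, hrev, SimpleGraph.Walk.length_nil]
    exact (SimpleGraph.Walk.eq_of_length_eq_zero hl).symm
  | @cons _ b _ h' q =>
    right
    refine ⟨b, ?_, ?_⟩
    · rw [connWithin_iff_walk]
      refine ⟨q.reverse, ?_⟩
      have : p.length = q.length + 1 := by
        have := congrArg SimpleGraph.Walk.length hrev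
        simpa using this
      simp; omega
    · exact ((openG G ω).symm.symm _ _ h' : _)

/-- Extend a connection by one edge at the far end. -/
theorem connWithin_extend {x u y : V} {r : ℕ} (h : ConnWithin G ω x u r)
    (h2 : OpenAdj G ω u y) : ConnWithin G ω x y (r + 1) := by
  rw [connWithin_iff_walk] at h ⊢
  obtain ⟨p, hp⟩ := h
  refine ⟨p.concat (show (openG G ω).Adj u y from h2), ?_⟩
  rw [SimpleGraph.Walk.length_concat]
  omega

theorem conn_iff_reachable {x y : V} : Conn G ω x y ↔ (openG G ω).Reachable x y := by
  rw [SimpleGraph.reachable_iff_reflTransGen]; rfl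

theorem _root_.Conn.connWithin [Fintype V] {x y : V} (h : Conn G ω x y) :
    ConnWithin G ω x y (Fintype.card V) := by
  rw [conn_iff_reachable] at h
  obtain ⟨p⟩ := h
  rw [connWithin_iff_walk]
  exact ⟨p.bypass, le_of_lt (p.bypass_isPath.length_lt)⟩

/-! ### Exploration: short vertices and revealed edges -/

variable (G ω) in
/-- `v` is within distance `< a` of `x₀`. -/
def Sh (x₀ : V) (a : ℕ) (v : V) : Prop := ∃ t, t < a ∧ ConnWithin G ω x₀ v t

variable (G ω) in
/-- An edge is revealed if it touches a vertex at distance `< a`. -/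
def Rv (x₀ : V) (a : ℕ) (e : Sym2 V) : Prop :=
  ∃ u v, e = s(u, v) ∧ (Sh G ω x₀ a u ∨ Sh G ω x₀ a v)

theorem rv_of_sh_left {x₀ : V} {a : ℕ} {u v : V} (h : Sh G ω x₀ a u) :
    Rv G ω x₀ a s(u, v) := ⟨u, v, rfl, Or.inl h⟩

theorem not_rv {x₀ : V} {a : ℕ} {u v : V} (hu : ¬ Sh G ω x₀ a u) (hv : ¬ Sh G ω x₀ a v) :
    ¬ Rv G ω x₀ a s(u, v) := by
  rintro ⟨u', v', he, h⟩
  rw [Sym2.eq_iff] at he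
  rcases he with ⟨rfl, rfl⟩ | ⟨rfl, rfl⟩
  · tauto
  · tauto

section Transport

variable {ω' : Sym2 V → Bool} {x₀ : V} {a : ℕ}

/-- Connections of length `≤ a` only depend on revealed edges. -/
theorem connWithin_transport (H : ∀ e, Rv G ω x₀ a e → ω' e = ω e) :
    ∀ t ≤ a, ∀ v, ConnWithin G ω x₀ v t → ConnWithin G ω' x₀ v t := by
  intro t
  induction t with
  | zero => intro _ v hv; rw [connWithin_zero] at hv; subst hv; exact connWithin_refl
  | succ t ih =>
    intro ht v hv
    rcases connWithin_peel hv with rfl | ⟨u, hu, hadj⟩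
    · exact connWithin_refl
    · have hu' := ih (by omega) u hu
      have hsh : Sh G ω x₀ a u := ⟨t, by omega, hu⟩
      have hval : ω' s(u, v) = ω s(u, v) := H _ (rv_of_sh_left hsh)
      exact connWithin_extend hu' ⟨hadj.1, by rw [hval]; exact hadj.2⟩

/-- Converse transport: connections in the modified configuration come from the original. -/
theorem connWithin_transport' (H : ∀ e, Rv G ω x₀ a e → ω' e = ω e) :
    ∀ t ≤ a, ∀ v, ConnWithin G ω' x₀ v t → ConnWithin G ω x₀ v t := by
  intro t
  induction t with
  | zero => intro _ v hv; rw [connWithin_zero] at hv; subst hv; exact connWithin_refl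
  | succ t ih =>
    intro ht v hv
    rcases connWithin_peel hv with rfl | ⟨u, hu, hadj⟩
    · exact connWithin_refl
    · have hu' := ih (by omega) u hu
      have hsh : Sh G ω x₀ a u := ⟨t, by omega, hu'⟩
      have hval : ω' s(u, v) = ω s(u, v) := H _ (rv_of_sh_left hsh)
      exact connWithin_extend hu' ⟨hadj.1, by rw [← hval]; exact hadj.2⟩

theorem sh_transport (H : ∀ e, Rv G ω x₀ a e → ω' e = ω e) :
    ∀ v, Sh G ω' x₀ a v ↔ Sh G ω x₀ a v := by
  intro v
  constructor
  · rintro ⟨t, ht, hc⟩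
    exact ⟨t, ht, connWithin_transport' H t (by omega) v hc⟩
  · rintro ⟨t, ht, hc⟩
    exact ⟨t, ht, connWithin_transport H t (by omega) v hc⟩

theorem rv_transport (H : ∀ e, Rv G ω x₀ a e → ω' e = ω e) :
    ∀ e, Rv G ω' x₀ a e ↔ Rv G ω x₀ a e := by
  intro e
  unfold Rv
  constructor <;>
  · rintro ⟨u, v, rfl, h⟩
    exact ⟨u, v, rfl, by rw [sh_transport H, sh_transport H] at *; exact h⟩

theorem distEq_transport (H : ∀ e, Rv G ω x₀ a e → ω' e = ω e) (z : V) :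
    DistEq G ω' x₀ z a ↔ DistEq G ω x₀ z a := by
  constructor
  · rintro ⟨h1, h2⟩
    exact ⟨connWithin_transport' H a le_rfl z h1,
      fun s hs hc => h2 s hs (connWithin_transport H s (le_of_lt hs) z hc)⟩
  · rintro ⟨h1, h2⟩
    exact ⟨connWithin_transport H a le_rfl z h1,
      fun s hs hc => h2 s hs (connWithin_transport' H s (le_of_lt hs) z hc)⟩

theorem connWithin_le_transport (H : ∀ e, Rv G ω x₀ a e → ω' e = ω e) {t : ℕ} (ht : t ≤ a)
    (z : V) : ConnWithin G ω' x₀ z t ↔ ConnWithin G ω x₀ z t :=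
  ⟨connWithin_transport' H t ht z, connWithin_transport H t ht z⟩

end Transport

/-- Mask away revealed edges. -/
def mask (ω : Sym2 V → Bool) (R : Sym2 V → Prop) (e : Sym2 V) : Bool :=
  if R e then false else ω e

/-- **Deterministic path-splitting.** If `y` is in `B(n)` but not in `B(a)`, there is a point
`z` at distance exactly `a` from which `y` is reachable in `n - a` steps using only
unrevealed edges. -/
theorem annulus_split {x₀ : V} {a : ℕ} :
    ∀ n, ∀ y : V, ConnWithin G ω x₀ y n → ¬ ConnWithin G ω x₀ y a →
      ∃ z, DistEq G ω x₀ z a ∧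
        ConnWithin G (mask ω (Rv G ω x₀ a)) z y (n - a) := by
  intro n
  induction n with
  | zero =>
    intro y h1 h2
    rw [connWithin_zero] at h1
    subst h1
    exact absurd connWithin_refl h2
  | succ n ih =>
    intro y h1 h2
    have hyB : ¬ ConnWithin G ω x₀ y a := h2
    rcases connWithin_peel h1 with rfl | ⟨u, hu, hadj⟩
    · exact absurd connWithin_refl h2
    · have hySh : ¬ Sh G ω x₀ a y := by
        rintro ⟨t, ht, hc⟩
        exact hyB (hc.mono_r (by omega))
      by_cases hua : ConnWithin G ω x₀ u a
      · -- u is on the sphere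
        have hna : a ≤ n := by
          by_contra hn
          exact hyB (h1.mono_r (by omega))
        have hdist : DistEq G ω x₀ u a := by
          refine ⟨hua, fun s hs hc => ?_⟩
          exact hyB ((connWithin_extend hc hadj).mono_r (by omega))
        have huSh : ¬ Sh G ω x₀ a u := by
          rintro ⟨t, ht, hc⟩
          exact hdist.2 t ht hc
        refine ⟨u, hdist, ?_⟩
        have hedge : mask ω (Rv G ω x₀ a) s(u, y) = true := by
          unfold mask
          rw [if_neg (not_rv huSh hySh)]
          exact hadj.2
        have : ConnWithin G (mask ω (Rv G ω x₀ a)) u y 1 :=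
          connWithin_extend connWithin_refl ⟨hadj.1, hedge⟩
        exact this.mono_r (by omega)
      · -- u is outside the ball; recurse
        obtain ⟨z, hz, hc⟩ := ih u hu hua
        have hna : a < n := by
          by_contra hn
          exact hua (hu.mono_r (by omega))
        have huSh : ¬ Sh G ω x₀ a u := by
          rintro ⟨t, ht, hc'⟩
          exact hua (hc'.mono_r (by omega))
        have hedge : mask ω (Rv G ω x₀ a) s(u, y) = true := by
          unfold mask
          rw [if_neg (not_rv huSh hySh)]
          exact hadj.2
        have := connWithin_extend hc ⟨hadj.1, hedge⟩
        exact ⟨z, hz, this.mono_r (show n - a + 1 ≤ n + 1 - a by omega)⟩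

/-! ### Probability infrastructure -/

/-- Real-valued indicator of a proposition. -/
def ind (P : Prop) : ℝ := if P then 1 else 0

theorem ind_pos {P : Prop} (h : P) : ind P = 1 := if_pos h
theorem ind_neg {P : Prop} (h : ¬ P) : ind P = 0 := if_neg h
theorem ind_nonneg (P : Prop) : 0 ≤ ind P := by
  unfold ind; split <;> norm_num
theorem ind_le_one (P : Prop) : ind P ≤ 1 := by
  unfold ind; split <;> norm_num
theorem ind_congr {P Q : Prop} (h : P ↔ Q) : ind P = ind Q := by
  unfold ind
  by_cases hP : P
  · rw [if_pos hP, if_pos (h.1 hP)]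
  · rw [if_neg hP, if_neg (fun hq => hP (h.2 hq))]

section Prob

variable [Fintype V] [DecidableEq V] {p : ℝ}

/-- Per-edge weight. -/
def wt (p : ℝ) (b : Bool) : ℝ := if b then p else 1 - p

theorem edgeWeight_eq_prod_wt (ω : Sym2 V → Bool) :
    edgeWeight p ω = ∏ e : Sym2 V, wt p (ω e) := rfl

theorem wt_nonneg (hp0 : 0 ≤ p) (hp1 : p ≤ 1) (b : Bool) : 0 ≤ wt p b := by
  cases b <;> simp [wt] <;> linarith

theorem edgeWeight_nonneg (hp0 : 0 ≤ p) (hp1 : p ≤ 1) (ω : Sym2 V → Bool) :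
    0 ≤ edgeWeight p ω :=
  Finset.prod_nonneg fun e _ => wt_nonneg hp0 hp1 (ω e)

/-- Mass of the set of configurations agreeing with `ρ` on `R`. -/
theorem restricted_mass (R : Sym2 V → Prop) (ρ : Sym2 V → Bool) :
    ∑ ω : Sym2 V → Bool, ind (∀ e, R e → ω e = ρ e) * edgeWeight p ω
      = ∏ e : Sym2 V, (ind (R e) * wt p (ρ e) + ind (¬ R e)) := by
  have key : ∀ ω : Sym2 V → Bool,
      ind (∀ e, R e → ω e = ρ e) * edgeWeight p ω
        = ∏ e : Sym2 V, (ind (¬ (R e ∧ ω e ≠ ρ e)) * wt p (ω e)) := by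
    intro ω
    by_cases h : ∀ e, R e → ω e = ρ e
    · rw [ind_pos h, one_mul, edgeWeight_eq_prod_wt]
      refine Finset.prod_congr rfl fun e _ => ?_
      rw [ind_pos, one_mul]
      rintro ⟨h1, h2⟩
      exact h2 (h e h1)
    · rw [ind_neg h, zero_mul]
      push_neg at h
      obtain ⟨e₀, he1, he2⟩ := h
      symm
      apply Finset.prod_eq_zero (Finset.mem_univ e₀)
      rw [ind_neg (show ¬¬(R e₀ ∧ ω e₀ ≠ ρ e₀) from not_not.2 ⟨he1, he2⟩), zero_mul]
  rw [Finset.sum_congr rfl fun ω _ => key ω]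
  rw [← Fintype.prod_sum (fun e b => ind (¬ (R e ∧ b ≠ ρ e)) * wt p b)]
  refine Finset.prod_congr rfl fun e _ => ?_
  rw [Fintype.sum_bool]
  by_cases hR : R e
  · rw [ind_pos hR, ind_neg (not_not.2 hR), one_mul, add_zero]
    cases hρ : ρ e
    · rw [ind_neg (not_not.2 ⟨hR, by simp [hρ]⟩),
        ind_pos (by rintro ⟨-, hc⟩; exact hc (by simp [hρ])), zero_mul, one_mul, zero_add]
    · rw [ind_pos (by rintro ⟨-, hc⟩; exact hc (by simp [hρ])),
        ind_neg (not_not.2 ⟨hR, by simp [hρ]⟩), one_mul, zero_mul, add_zero]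
  · rw [ind_neg hR, ind_pos hR, zero_mul, zero_add, ind_pos (by simp [hR]),
      ind_pos (by simp [hR]), one_mul, one_mul]
    show wt p true + wt p false = 1
    simp [wt]

theorem sum_edgeWeight : ∑ ω : Sym2 V → Bool, edgeWeight p ω = (1 : ℝ) := by
  have h := restricted_mass (V := V) (p := p) (fun _ => False) (fun _ => false)
  have h1 : ∀ ω : Sym2 V → Bool, ind (∀ e : Sym2 V, False → ω e = false) * edgeWeight p ω
      = edgeWeight p ω := by
    intro ω
    rw [ind_pos (fun e h => h.elim), one_mul]
  rw [Finset.sum_congr rfl fun ω _ => (h1 ω).symm, h]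
  rw [Finset.prod_congr rfl fun e (_ : e ∈ Finset.univ) =>
    show ind False * wt p (false) + ind (¬ False) = 1 by
      rw [ind_neg id, ind_pos id, zero_mul, zero_add]]
  exact Finset.prod_const_one

variable (G) in
/-- Resplice: keep `ω` on edges revealed by exploring `B(a)` in `ω`, use `τ` elsewhere. -/
def splice (x₀ : V) (a : ℕ) (ω τ : Sym2 V → Bool) : Sym2 V → Bool :=
  fun e => if Rv G ω x₀ a e then ω e else τ e

theorem splice_agrees {x₀ : V} {a : ℕ} (ω τ : Sym2 V → Bool) :
    ∀ e, Rv G ω x₀ a e → splice G x₀ a ω τ e = ω e := fun e he => if_pos he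

theorem rv_splice {x₀ : V} {a : ℕ} (ω τ : Sym2 V → Bool) :
    ∀ e, Rv G (splice G x₀ a ω τ) x₀ a e ↔ Rv G ω x₀ a e :=
  rv_transport (splice_agrees ω τ)

theorem splice_eq_iff {x₀ : V} {a : ℕ} (ω τ ρ : Sym2 V → Bool) :
    splice G x₀ a ω τ = ρ ↔
      ((∀ e, Rv G ρ x₀ a e → ω e = ρ e) ∧ (∀ e, ¬ Rv G ρ x₀ a e → τ e = ρ e)) := by
  constructor
  · rintro rfl
    constructor
    · intro e he
      rw [rv_splice] at he
      exact (splice_agrees ω τ e he).symm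
    · intro e he
      rw [rv_splice] at he
      exact (if_neg he).symm
  · rintro ⟨h1, h2⟩
    have hrv : ∀ e, Rv G ω x₀ a e ↔ Rv G ρ x₀ a e := rv_transport h1
    funext e
    unfold splice
    by_cases he : Rv G ω x₀ a e
    · rw [if_pos he]
      exact h1 e ((hrv e).1 he)
    · rw [if_neg he]
      exact h2 e (fun hc => he ((hrv e).2 hc))

theorem splice_fiber_mass {x₀ : V} {a : ℕ} (ρ : Sym2 V → Bool) :
    ∑ ω : Sym2 V → Bool, ∑ τ : Sym2 V → Bool,
      ind (splice G x₀ a ω τ = ρ) * (edgeWeight p ω * edgeWeight p τ)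
      = edgeWeight p ρ := by
  have key : ∀ ω τ : Sym2 V → Bool,
      ind (splice G x₀ a ω τ = ρ) * (edgeWeight p ω * edgeWeight p τ)
      = (ind (∀ e, Rv G ρ x₀ a e → ω e = ρ e) * edgeWeight p ω) *
        (ind (∀ e, ¬ Rv G ρ x₀ a e → τ e = ρ e) * edgeWeight p τ) := by
    intro ω τ
    by_cases h : splice G x₀ a ω τ = ρ
    · obtain ⟨h1, h2⟩ := (splice_eq_iff ω τ ρ).1 h
      rw [ind_pos h, ind_pos h1, ind_pos h2]
      ring
    · rw [ind_neg h, zero_mul]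
      by_cases h1 : ∀ e, Rv G ρ x₀ a e → ω e = ρ e
      · by_cases h2 : ∀ e, ¬ Rv G ρ x₀ a e → τ e = ρ e
        · exact absurd ((splice_eq_iff ω τ ρ).2 ⟨h1, h2⟩) h
        · rw [ind_neg h2]; ring
      · rw [ind_neg h1]; ring
  rw [Finset.sum_congr rfl fun ω _ => Finset.sum_congr rfl fun τ _ => key ω τ]
  rw [← Finset.sum_mul_sum Finset.univ Finset.univ
    (fun ω => ind (∀ e, Rv G ρ x₀ a e → ω e = ρ e) * edgeWeight p ω)
    (fun τ => ind (∀ e, ¬ Rv G ρ x₀ a e → τ e = ρ e) * edgeWeight p τ)]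
  rw [restricted_mass (fun e => Rv G ρ x₀ a e) ρ,
    restricted_mass (fun e => ¬ Rv G ρ x₀ a e) ρ, ← Finset.prod_mul_distrib,
    edgeWeight_eq_prod_wt]
  refine Finset.prod_congr rfl fun e _ => ?_
  beta_reduce
  by_cases he : Rv G ρ x₀ a e
  · rw [ind_pos he, ind_neg (not_not.2 he), ind_pos (not_not.2 he)]
    ring
  · rw [ind_neg he, ind_pos he, ind_neg (show ¬¬¬Rv G ρ x₀ a e from not_not.2 he)]
    ring

/-- **Resampling identity**: resampling the unexplored edges preserves the measure. -/
theorem resample {x₀ : V} {a : ℕ} (F : (Sym2 V → Bool) → ℝ) :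
    percExp p F = ∑ ω : Sym2 V → Bool, ∑ τ : Sym2 V → Bool,
      edgeWeight p ω * edgeWeight p τ * F (splice G x₀ a ω τ) := by
  have key : ∀ ω τ : Sym2 V → Bool,
      edgeWeight p ω * edgeWeight p τ * F (splice G x₀ a ω τ)
      = ∑ ρ : Sym2 V → Bool,
          (ind (splice G x₀ a ω τ = ρ) * (edgeWeight p ω * edgeWeight p τ)) * F ρ := by
    intro ω τ
    rw [Finset.sum_eq_single (splice G x₀ a ω τ)]
    · rw [ind_pos rfl, one_mul]
    · intro ρ _ hρ
      rw [ind_neg (fun hc => hρ hc.symm), zero_mul, zero_mul]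
    · intro h
      exact absurd (Finset.mem_univ _) h
  rw [Finset.sum_congr rfl fun ω _ => Finset.sum_congr rfl fun τ _ => key ω τ]
  rw [show (∑ ω : Sym2 V → Bool, ∑ τ : Sym2 V → Bool, ∑ ρ : Sym2 V → Bool,
      (ind (splice G x₀ a ω τ = ρ) * (edgeWeight p ω * edgeWeight p τ)) * F ρ)
    = ∑ ρ : Sym2 V → Bool, ∑ ω : Sym2 V → Bool, ∑ τ : Sym2 V → Bool,
      (ind (splice G x₀ a ω τ = ρ) * (edgeWeight p ω * edgeWeight p τ)) * F ρ from by
    rw [show (∑ ω : Sym2 V → Bool, ∑ τ : Sym2 V → Bool, ∑ ρ : Sym2 V → Bool,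
        (ind (splice G x₀ a ω τ = ρ) * (edgeWeight p ω * edgeWeight p τ)) * F ρ)
      = ∑ ω : Sym2 V → Bool, ∑ ρ : Sym2 V → Bool, ∑ τ : Sym2 V → Bool,
        (ind (splice G x₀ a ω τ = ρ) * (edgeWeight p ω * edgeWeight p τ)) * F ρ from
      Finset.sum_congr rfl fun ω _ => Finset.sum_comm]
    exact Finset.sum_comm]
  unfold percExp
  refine Finset.sum_congr rfl fun ρ _ => ?_
  rw [show (∑ ω : Sym2 V → Bool, ∑ τ : Sym2 V → Bool,
      (ind (splice G x₀ a ω τ = ρ) * (edgeWeight p ω * edgeWeight p τ)) * F ρ)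
    = (∑ ω : Sym2 V → Bool, ∑ τ : Sym2 V → Bool,
      ind (splice G x₀ a ω τ = ρ) * (edgeWeight p ω * edgeWeight p τ)) * F ρ from by
    rw [Finset.sum_mul]
    exact Finset.sum_congr rfl fun ω _ => (Finset.sum_mul _ _ _).symm]
  rw [splice_fiber_mass]

/-! ### Counting lemmas -/

theorem ind_le_ind {P Q : Prop} (h : P → Q) : ind P ≤ ind Q := by
  by_cases hP : P
  · rw [ind_pos hP, ind_pos (h hP)]
  · rw [ind_neg hP]; exact ind_nonneg Q

theorem cardFilter_cast (P : V → Prop) :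
    (((Finset.univ.filter P).card : ℝ)) = ∑ y : V, ind (P y) := by
  rw [Finset.card_filter, Nat.cast_sum]
  refine Finset.sum_congr rfl fun y _ => ?_
  by_cases h : P y
  · rw [if_pos h, ind_pos h, Nat.cast_one]
  · rw [if_neg h, ind_neg h, Nat.cast_zero]

theorem natCard_cast (P : V → Prop) :
    ((Nat.card {y : V // P y} : ℝ)) = ∑ y : V, ind (P y) := by
  rw [Nat.card_eq_fintype_card, Fintype.card_subtype, cardFilter_cast]

theorem ballSize_cast (ω : Sym2 V → Bool) (x : V) (r : ℕ) :
    ((ballSize G ω x r : ℝ)) = ∑ y : V, ind (ConnWithin G ω x y r) :=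
  natCard_cast _

theorem clusterSize_cast (ω : Sym2 V → Bool) (x : V) :
    ((clusterSize G ω x : ℝ)) = ∑ y : V, ind (Conn G ω x y) :=
  natCard_cast _

/-! ### Expectation basics -/

theorem percExp_mono (hp0 : 0 ≤ p) (hp1 : p ≤ 1) {f g : (Sym2 V → Bool) → ℝ}
    (h : ∀ ω, f ω ≤ g ω) : percExp p f ≤ percExp p g :=
  Finset.sum_le_sum fun ω _ =>
    mul_le_mul_of_nonneg_left (h ω) (edgeWeight_nonneg hp0 hp1 ω)

theorem percExp_nonneg (hp0 : 0 ≤ p) (hp1 : p ≤ 1) {f : (Sym2 V → Bool) → ℝ}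
    (h : ∀ ω, 0 ≤ f ω) : 0 ≤ percExp p f :=
  Finset.sum_nonneg fun ω _ =>
    mul_nonneg (edgeWeight_nonneg hp0 hp1 ω) (h ω)

theorem percExp_add (f g : (Sym2 V → Bool) → ℝ) :
    percExp p (fun ω => f ω + g ω) = percExp p f + percExp p g := by
  unfold percExp
  rw [← Finset.sum_add_distrib]
  exact Finset.sum_congr rfl fun ω _ => mul_add _ _ _

theorem percExp_sum {ι : Type*} (I : Finset ι) (f : ι → (Sym2 V → Bool) → ℝ) :
    percExp p (fun ω => ∑ i ∈ I, f i ω) = ∑ i ∈ I, percExp p (f i) := by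
  unfold percExp
  rw [Finset.sum_comm]
  exact Finset.sum_congr rfl fun ω _ => Finset.mul_sum _ _ _

/-! ### The key annulus bound -/

/-- Pointwise bound: the annulus is covered by masked balls around sphere points. -/
theorem annulus_pointwise (x₀ : V) (a s : ℕ) (ω : Sym2 V → Bool) :
    ((ballSize G ω x₀ (a + s) : ℝ)) ≤ (ballSize G ω x₀ a : ℝ) +
      ∑ z : V, ind (DistEq G ω x₀ z a) *
        ∑ y : V, ind (ConnWithin G (mask ω (Rv G ω x₀ a)) z y s) := by
  have hsub : (Finset.univ.filter (fun y => ConnWithin G ω x₀ y (a + s))).card ≤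
      (Finset.univ.filter (fun y => ConnWithin G ω x₀ y a)).card +
      (Finset.univ.filter (fun y => ConnWithin G ω x₀ y (a + s) ∧
        ¬ ConnWithin G ω x₀ y a)).card := by
    rw [← Finset.card_union_of_disjoint]
    · apply Finset.card_le_card
      intro y hy
      rw [Finset.mem_filter] at hy
      rw [Finset.mem_union, Finset.mem_filter, Finset.mem_filter]
      by_cases h : ConnWithin G ω x₀ y a
      · exact Or.inl ⟨hy.1, h⟩
      · exact Or.inr ⟨hy.1, hy.2, h⟩
    · rw [Finset.disjoint_filter]
      rintro y _ h1 ⟨_, h2⟩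
      exact h2 h1
  have hann : (Finset.univ.filter (fun y => ConnWithin G ω x₀ y (a + s) ∧
        ¬ ConnWithin G ω x₀ y a)).card ≤
      ∑ z ∈ Finset.univ.filter (fun z => DistEq G ω x₀ z a),
        (Finset.univ.filter (fun y =>
          ConnWithin G (mask ω (Rv G ω x₀ a)) z y s)).card := by
    have hcover : (Finset.univ.filter (fun y => ConnWithin G ω x₀ y (a + s) ∧
          ¬ ConnWithin G ω x₀ y a)) ⊆
        (Finset.univ.filter (fun z => DistEq G ω x₀ z a)).biUnion
          (fun z => Finset.univ.filter (fun y =>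
            ConnWithin G (mask ω (Rv G ω x₀ a)) z y s)) := by
      intro y hy
      rw [Finset.mem_filter] at hy
      obtain ⟨z, hz, hc⟩ := annulus_split (a + s) y hy.2.1 hy.2.2
      rw [Finset.mem_biUnion]
      refine ⟨z, by rw [Finset.mem_filter]; exact ⟨Finset.mem_univ z, hz⟩, ?_⟩
      rw [Finset.mem_filter]
      refine ⟨Finset.mem_univ y, ?_⟩
      rwa [Nat.add_sub_cancel_left] at hc
    exact (Finset.card_le_card hcover).trans (Finset.card_biUnion_le)
  have := hsub.trans (Nat.add_le_add_left hann _)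
  have hcast : ((Finset.univ.filter (fun y => ConnWithin G ω x₀ y (a + s))).card : ℝ) ≤
      ((Finset.univ.filter (fun y => ConnWithin G ω x₀ y a)).card : ℝ) +
      ∑ z ∈ Finset.univ.filter (fun z => DistEq G ω x₀ z a),
        ((Finset.univ.filter (fun y =>
          ConnWithin G (mask ω (Rv G ω x₀ a)) z y s)).card : ℝ) := by
    push_cast
    exact_mod_cast this
  rw [ballSize_cast, ballSize_cast, ← cardFilter_cast, ← cardFilter_cast]
  refine hcast.trans (le_of_eq ?_)
  congr 1
  rw [Finset.sum_filter]
  refine Finset.sum_congr rfl fun z _ => ?_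
  by_cases h : DistEq G ω x₀ z a
  · rw [if_pos h, ind_pos h, one_mul, cardFilter_cast]
  · rw [if_neg h, ind_neg h, zero_mul]

/-- **Claim A**: one-step annulus expectation bound. -/
theorem claimA (hp0 : 0 ≤ p) (hp1 : p ≤ 1) (x₀ : V) (a s : ℕ) {M : ℝ} (hM0 : 0 ≤ M)
    (hM : ∀ z : V, percExp p (fun ω => (ballSize G ω z s : ℝ)) ≤ M) :
    percExp p (fun ω => (ballSize G ω x₀ (a + s) : ℝ))
      ≤ percExp p (fun ω => (ballSize G ω x₀ a : ℝ))
        + percExp p (fun ω => ∑ z : V, ind (DistEq G ω x₀ z a)) * M := by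
  have step1 : percExp p (fun ω => (ballSize G ω x₀ (a + s) : ℝ))
      ≤ percExp p (fun ω => (ballSize G ω x₀ a : ℝ) +
          ∑ z : V, ind (DistEq G ω x₀ z a) *
            ∑ y : V, ind (ConnWithin G (mask ω (Rv G ω x₀ a)) z y s)) :=
    percExp_mono hp0 hp1 (annulus_pointwise x₀ a s)
  rw [percExp_add] at step1
  refine step1.trans ?_
  rw [add_le_add_iff_left]
  -- Apply the resampling identity to the annulus functional.
  rw [resample (x₀ := x₀) (a := a) (fun ω => ∑ z : V, ind (DistEq G ω x₀ z a) *
    ∑ y : V, ind (ConnWithin G (mask ω (Rv G ω x₀ a)) z y s))]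
  -- Pointwise bound after resampling.
  have point : ∀ ω τ : Sym2 V → Bool,
      (∑ z : V, ind (DistEq G (splice G x₀ a ω τ) x₀ z a) *
        ∑ y : V, ind (ConnWithin G
          (mask (splice G x₀ a ω τ) (Rv G (splice G x₀ a ω τ) x₀ a)) z y s))
      ≤ ∑ z : V, ind (DistEq G ω x₀ z a) * (ballSize G τ z s : ℝ) := by
    intro ω τ
    refine Finset.sum_le_sum fun z _ => ?_
    rw [ind_congr (distEq_transport (splice_agrees ω τ) z)]
    refine mul_le_mul_of_nonneg_left ?_ (ind_nonneg _)
    rw [ballSize_cast]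
    refine Finset.sum_le_sum fun y _ => ?_
    refine ind_le_ind fun hc => ?_
    refine hc.mono_omega fun e he => ?_
    unfold mask at he
    by_cases hrv : Rv G (splice G x₀ a ω τ) x₀ a e
    · rw [if_pos hrv] at he; exact absurd he (by simp)
    · rw [if_neg hrv] at he
      rw [rv_splice] at hrv
      unfold splice at he
      rwa [if_neg hrv] at he
  have wnn : ∀ ω : Sym2 V → Bool, 0 ≤ edgeWeight p ω := edgeWeight_nonneg hp0 hp1
  calc ∑ ω : Sym2 V → Bool, ∑ τ : Sym2 V → Bool,
        edgeWeight p ω * edgeWeight p τ * ((fun ω => ∑ z : V, ind (DistEq G ω x₀ z a) *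
          ∑ y : V, ind (ConnWithin G (mask ω (Rv G ω x₀ a)) z y s)) (splice G x₀ a ω τ))
      ≤ ∑ ω : Sym2 V → Bool, ∑ τ : Sym2 V → Bool,
        edgeWeight p ω * edgeWeight p τ *
          (∑ z : V, ind (DistEq G ω x₀ z a) * (ballSize G τ z s : ℝ)) := by
        refine Finset.sum_le_sum fun ω _ => Finset.sum_le_sum fun τ _ => ?_
        exact mul_le_mul_of_nonneg_left (point ω τ) (mul_nonneg (wnn ω) (wnn τ))
    _ = ∑ ω : Sym2 V → Bool, edgeWeight p ω * ∑ z : V, ind (DistEq G ω x₀ z a) *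
          (∑ τ : Sym2 V → Bool, edgeWeight p τ * (ballSize G τ z s : ℝ)) := by
        refine Finset.sum_congr rfl fun ω _ => ?_
        simp only [Finset.mul_sum]
        rw [Finset.sum_comm]
        refine Finset.sum_congr rfl fun z _ => Finset.sum_congr rfl fun τ _ => by ring
    _ ≤ ∑ ω : Sym2 V → Bool, edgeWeight p ω * ∑ z : V, ind (DistEq G ω x₀ z a) * M := by
        refine Finset.sum_le_sum fun ω _ => ?_
        refine mul_le_mul_of_nonneg_left ?_ (wnn ω)
        refine Finset.sum_le_sum fun z _ => ?_
        exact mul_le_mul_of_nonneg_left (hM z) (ind_nonneg _)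
    _ = percExp p (fun ω => ∑ z : V, ind (DistEq G ω x₀ z a)) * M := by
        unfold percExp
        rw [Finset.sum_mul]
        refine Finset.sum_congr rfl fun ω _ => ?_
        rw [← Finset.sum_mul, mul_assoc]

/-! ### Sphere decomposition -/

theorem ind_connWithin_eq_sum (x₀ y : V) (t : ℕ) (ω : Sym2 V → Bool) :
    ind (ConnWithin G ω x₀ y t) = ∑ i ∈ Finset.range (t + 1), ind (DistEq G ω x₀ y i) := by
  by_cases h : ConnWithin G ω x₀ y t
  · have hex : ∃ n, ConnWithin G ω x₀ y n := ⟨t, h⟩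
    have hi₀ : ConnWithin G ω x₀ y (Nat.find hex) := Nat.find_spec hex
    have hmin : ∀ s < Nat.find hex, ¬ ConnWithin G ω x₀ y s := fun s hs => Nat.find_min hex hs
    have hle : Nat.find hex ≤ t := Nat.find_le h
    rw [ind_pos h, Finset.sum_eq_single (Nat.find hex)]
    · rw [ind_pos ⟨hi₀, hmin⟩]
    · intro i _ hne
      apply ind_neg
      rintro ⟨h1, h2⟩
      rcases lt_or_gt_of_ne hne with hlt | hgt
      · exact hmin i hlt h1
      · exact h2 (Nat.find hex) hgt hi₀
    · intro hmem
      exact absurd (Finset.mem_range.2 (by omega)) hmem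
  · rw [ind_neg h]
    symm
    apply Finset.sum_eq_zero
    intro i hi
    apply ind_neg
    rintro ⟨h1, -⟩
    exact h (h1.mono_r (by have := Finset.mem_range.1 hi; omega))

theorem percExp_ball_eq_sum_sph (x₀ : V) (t : ℕ) :
    percExp p (fun ω => (ballSize G ω x₀ t : ℝ))
      = ∑ i ∈ Finset.range (t + 1),
          percExp p (fun ω => ∑ z : V, ind (DistEq G ω x₀ z i)) := by
  have hpt : ∀ ω : Sym2 V → Bool, ((ballSize G ω x₀ t : ℝ))
      = ∑ i ∈ Finset.range (t + 1), ∑ z : V, ind (DistEq G ω x₀ z i) := by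
    intro ω
    rw [ballSize_cast]
    rw [Finset.sum_congr rfl fun y (_ : y ∈ Finset.univ) => ind_connWithin_eq_sum x₀ y t ω]
    rw [Finset.sum_comm]
  rw [← percExp_sum]
  unfold percExp
  refine Finset.sum_congr rfl fun ω _ => ?_
  beta_reduce
  rw [hpt ω]

/-! ### Monotonicity and the cluster -/

theorem percExp_ball_mono (hp0 : 0 ≤ p) (hp1 : p ≤ 1) (x₀ : V) {t t' : ℕ} (h : t ≤ t') :
    percExp p (fun ω => (ballSize G ω x₀ t : ℝ))
      ≤ percExp p (fun ω => (ballSize G ω x₀ t' : ℝ)) := by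
  refine percExp_mono hp0 hp1 fun ω => ?_
  rw [ballSize_cast, ballSize_cast]
  exact Finset.sum_le_sum fun y _ => ind_le_ind fun hc => hc.mono_r h

theorem percExp_cluster_le_ball (hp0 : 0 ≤ p) (hp1 : p ≤ 1) (x₀ : V) :
    percExp p (fun ω => (clusterSize G ω x₀ : ℝ))
      ≤ percExp p (fun ω => (ballSize G ω x₀ (Fintype.card V) : ℝ)) := by
  refine percExp_mono hp0 hp1 fun ω => ?_
  rw [ballSize_cast, clusterSize_cast]
  exact Finset.sum_le_sum fun y _ => ind_le_ind fun hc => hc.connWithin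

/-! ### Transitivity -/

variable (G) in
def sym2Equiv (φ : G ≃g G) : Sym2 V ≃ Sym2 V where
  toFun := Sym2.map φ
  invFun := Sym2.map φ.symm
  left_inv := by
    intro e
    induction e with
    | _ u v => simp [Sym2.map_pair_eq]
  right_inv := by
    intro e
    induction e with
    | _ u v => simp [Sym2.map_pair_eq]

theorem connWithin_map (φ : G ≃g G) (ω : Sym2 V → Bool) (x y : V) (s : ℕ) :
    ConnWithin G (fun e => ω (Sym2.map φ e)) x y s ↔ ConnWithin G ω (φ x) (φ y) s := by
  constructor
  · rintro ⟨l, hc, hlast, hlen⟩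
    refine ⟨l.map φ, ?_, ?_, by simpa using hlen⟩
    · rw [List.Chain, ← List.map_cons, List.isChain_map]
      refine List.IsChain.imp (fun u v huv => ?_) hc
      refine ⟨(SimpleGraph.Iso.map_adj_iff φ).2 huv.1, ?_⟩
      rw [← Sym2.map_pair_eq]
      exact huv.2
    · have : ((x :: l).map φ).getLast (by simp) = φ ((x :: l).getLast (List.cons_ne_nil x l)) :=
        List.getLast_map _
      rw [show ((φ x :: l.map φ).getLast (List.cons_ne_nil _ _))
        = (((x :: l).map φ).getLast (by simp)) from rfl, this, hlast]
  · rintro ⟨l, hc, hlast, hlen⟩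
    refine ⟨l.map φ.symm, ?_, ?_, by simpa using hlen⟩
    · have hx : x = φ.symm (φ x) := by simp
      rw [hx, List.Chain, ← List.map_cons, List.isChain_map]
      refine List.IsChain.imp (fun u v huv => ?_) hc
      constructor
      · have := (SimpleGraph.Iso.map_adj_iff φ.symm).2 huv.1
        exact this
      · have hh : Sym2.map φ s(φ.symm u, φ.symm v) = s(u, v) := by
          simp [Sym2.map_pair_eq]
        show ω (Sym2.map φ s(φ.symm u, φ.symm v)) = true
        rw [hh]
        exact huv.2
    · have h2 : ((φ x :: l).map φ.symm).getLast (by simp)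
          = φ.symm ((φ x :: l).getLast (List.cons_ne_nil _ _)) := List.getLast_map _
      have h3 : (x :: l.map φ.symm) = ((φ x :: l).map φ.symm) := by
        rw [List.map_cons]
        congr 1
        simp
      have h4 : (x :: l.map φ.symm).getLast (List.cons_ne_nil _ _)
          = ((φ x :: l).map φ.symm).getLast (by simp [← h3]) := by
        congr 1
      rw [h4, h2, hlast]
      simp

theorem ballSize_map (φ : G ≃g G) (ω : Sym2 V → Bool) (x : V) (s : ℕ) :
    ballSize G (fun e => ω (Sym2.map φ e)) x s = ballSize G ω (φ x) s := by
  unfold ballSize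
  refine Nat.card_congr (Equiv.subtypeEquiv φ.toEquiv fun y => ?_)
  rw [connWithin_map]
  rfl

theorem edgeWeight_map (φ : G ≃g G) (ω : Sym2 V → Bool) :
    edgeWeight p (fun e => ω (Sym2.map φ e)) = edgeWeight p ω := by
  rw [edgeWeight_eq_prod_wt, edgeWeight_eq_prod_wt]
  exact Equiv.prod_comp (sym2Equiv G φ) (fun e => wt p (ω e))

theorem percExp_ball_transitive (htrans : ∀ x y : V, ∃ φ : G ≃g G, φ x = y)
    (x z : V) (s : ℕ) :
    percExp p (fun ω => (ballSize G ω z s : ℝ))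
      = percExp p (fun ω => (ballSize G ω x s : ℝ)) := by
  obtain ⟨φ, hφ⟩ := htrans x z
  unfold percExp
  refine Fintype.sum_equiv ((sym2Equiv G φ).arrowCongr (Equiv.refl Bool)).symm
    _ _ fun ω => ?_
  show edgeWeight p ω * ((ballSize G ω z s : ℝ))
      = edgeWeight p (fun e => ω (Sym2.map φ e)) *
        ((ballSize G (fun e => ω (Sym2.map φ e)) x s : ℝ))
  rw [edgeWeight_map, ballSize_map, hφ]

/-! ### Pigeonhole -/

theorem pigeon {I : Finset ℕ} (hne : I.Nonempty) {g : ℕ → ℝ} {c : ℝ}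
    (h : ∑ i ∈ I, g i ≤ c) : ∃ i ∈ I, g i ≤ c / I.card := by
  by_contra hno
  push_neg at hno
  have hlt : ∑ _i ∈ I, c / I.card < ∑ i ∈ I, g i :=
    Finset.sum_lt_sum_of_nonempty hne hno
  rw [Finset.sum_const, nsmul_eq_mul] at hlt
  have hcard : (0 : ℝ) < I.card := by
    have := Finset.card_pos.2 hne
    exact_mod_cast this
  rw [mul_div_cancel₀ c (ne_of_gt hcard)] at hlt
  linarith

end Prob

end Perc

open Perc


/-- **Lower bound on the critical expected ball size.**  For any `λ > 0` there is a
constant `ξ > 0` such that on any finite transitive graph, if `p_c ∈ [0,1]` satisfies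
`E_{p_c}|C(0)| = λ V^{1/3}`, then `E_{p_c}|B(r)| ≥ r/4` for all integers
`r ≤ ξ V^{1/3}`. -/
theorem critical_ball_lower_bound :
    ∀ lam : ℝ, 0 < lam → ∃ ξ : ℝ, 0 < ξ ∧
      ∀ (V : Type) [Fintype V] [DecidableEq V] (G : SimpleGraph V),
        (∀ x y : V, ∃ φ : G ≃g G, φ x = y) →
        ∀ (p : ℝ), 0 ≤ p → p ≤ 1 → ∀ x₀ : V,
          percExp p (fun ω => (clusterSize G ω x₀ : ℝ))
            = lam * (Fintype.card V : ℝ) ^ ((1 : ℝ) / 3) →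
          ∀ r : ℕ, (r : ℝ) ≤ ξ * (Fintype.card V : ℝ) ^ ((1 : ℝ) / 3) →
            (r : ℝ) / 4 ≤ percExp p (fun ω => (ballSize G ω x₀ r : ℝ)) := by
  intro lam hlam
  refine ⟨lam / 2, by linarith, ?_⟩
  intro V _ _ G htrans p hp0 hp1 x₀ hEC r hrV
  -- notation
  set f : ℕ → ℝ := fun t => percExp p (fun ω => (ballSize G ω x₀ t : ℝ)) with hf_def
  set g : ℕ → ℝ := fun i => percExp p (fun ω => ∑ z : V, ind (DistEq G ω x₀ z i)) with hg_def
  have hfnn : ∀ t, 0 ≤ f t := fun t =>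
    percExp_nonneg hp0 hp1 fun ω => by positivity
  rcases Nat.eq_zero_or_pos r with rfl | hr1
  · simpa using hfnn 0
  by_contra hcon
  push_neg at hcon
  -- hcon : f r < r / 4
  have hfmono : ∀ {t t' : ℕ}, t ≤ t' → f t ≤ f t' := fun h => percExp_ball_mono hp0 hp1 x₀ h
  have hdecomp : ∀ t, f t = ∑ i ∈ Finset.range (t + 1), g i := fun t =>
    percExp_ball_eq_sum_sph x₀ t
  have hgnn : ∀ i, 0 ≤ g i := fun i =>
    percExp_nonneg hp0 hp1 fun ω => Finset.sum_nonneg fun z _ => ind_nonneg _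
  have hMr : ∀ z : V, percExp p (fun ω => (ballSize G ω z r : ℝ)) ≤ f r := fun z =>
    le_of_eq (percExp_ball_transitive htrans x₀ z r)
  have hstep : ∀ a : ℕ, f (a + r) ≤ f a + g a * f r :=
    fun a => claimA hp0 hp1 x₀ a r (hfnn r) hMr
  have hrR : (1 : ℝ) ≤ (r : ℝ) := by exact_mod_cast hr1
  -- the inductive construction
  have main : ∀ k : ℕ, ∃ j : ℕ, k ≤ j ∧ g j ≤ (1/4 : ℝ)^(k+1) ∧
      f j ≤ (r : ℝ)/4 + ((r : ℝ)/12) * (1 - (1/4 : ℝ)^k) := by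
    intro k
    induction k with
    | zero =>
      have hsum : ∑ i ∈ Finset.range (r + 1), g i ≤ (r : ℝ)/4 := by
        rw [← hdecomp]; linarith
      obtain ⟨i, hiI, hi⟩ := pigeon ⟨0, Finset.mem_range.2 (by omega)⟩ hsum
      refine ⟨i, Nat.zero_le i, ?_, ?_⟩
      · refine hi.trans ?_
        rw [Finset.card_range]
        have hc : (0:ℝ) < ((r + 1 : ℕ) : ℝ) := by exact_mod_cast Nat.succ_pos r
        rw [div_le_iff₀ hc]
        push_cast
        norm_num
        linarith
      · have him : i ≤ r := by
          have := Finset.mem_range.1 hiI; omega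
        calc f i ≤ f r := hfmono him
          _ ≤ (r:ℝ)/4 + (r:ℝ)/12 * (1 - (1/4:ℝ)^(0:ℕ)) := by
            norm_num
            linarith
    | succ k ih =>
      obtain ⟨j, hjk, hgj, hfj⟩ := ih
      have hann : f (j + r) ≤ f j + (1/4 : ℝ)^(k+1) * ((r : ℝ)/4) := by
        have h1 := hstep j
        have h2 : g j * f r ≤ (1/4 : ℝ)^(k+1) * ((r : ℝ)/4) := by
          have := hfnn r
          have := hgnn j
          have hfr4 : f r ≤ (r : ℝ)/4 := le_of_lt hcon
          nlinarith
        linarith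
      have hIco : ∑ i ∈ Finset.Ico (j + 1) (j + r + 1), g i
          ≤ (1/4 : ℝ)^(k+1) * ((r : ℝ)/4) := by
        have hsub : ∑ i ∈ Finset.Ico (j + 1) (j + r + 1), g i = f (j + r) - f j := by
          rw [Finset.sum_Ico_eq_sub _ (by omega : j + 1 ≤ j + r + 1)]
          rw [show j + r + 1 = (j + r) + 1 from rfl, ← hdecomp, ← hdecomp]
        rw [hsub]
        linarith
      obtain ⟨i, hiI, hi⟩ := pigeon (I := Finset.Ico (j + 1) (j + r + 1))
        ⟨j + 1, Finset.mem_Ico.2 (by omega)⟩ hIco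
      have hicard : (Finset.Ico (j + 1) (j + r + 1)).card = r := by
        rw [Nat.card_Ico]; omega
      have hmem := Finset.mem_Ico.1 hiI
      refine ⟨i, by omega, ?_, ?_⟩
      · refine hi.trans ?_
        rw [hicard]
        rw [div_le_iff₀ (by exact_mod_cast hr1)]
        have heq : (1/4 : ℝ)^(k+1+1) * (r : ℝ) = (1/4 : ℝ)^(k+1) * ((r:ℝ)/4) := by ring
        rw [heq]
      · have hile : i ≤ j + r := by omega
        have h4 : f i ≤ f (j + r) := hfmono hile
        have hx : (0:ℝ) ≤ (1/4 : ℝ)^k := by positivity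
        have hexp : (1/4 : ℝ)^(k+1) = (1/4 : ℝ)^k * (1/4) := by ring
        calc f i ≤ f (j + r) := h4
          _ ≤ f j + (1/4 : ℝ)^(k+1) * ((r : ℝ)/4) := hann
          _ ≤ (r : ℝ)/4 + ((r : ℝ)/12) * (1 - (1/4 : ℝ)^k)
              + (1/4 : ℝ)^(k+1) * ((r : ℝ)/4) := by linarith
          _ ≤ (r : ℝ)/4 + ((r : ℝ)/12) * (1 - (1/4 : ℝ)^(k+1)) := by
              rw [hexp]
              nlinarith
  -- conclusion
  obtain ⟨j, hjk, -, hfj⟩ := main (Fintype.card V)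
  have hclB : percExp p (fun ω => (clusterSize G ω x₀ : ℝ)) ≤ f (Fintype.card V) :=
    percExp_cluster_le_ball hp0 hp1 x₀
  have hfcard : f (Fintype.card V) ≤ f j := hfmono hjk
  have hq : (0:ℝ) ≤ (1/4 : ℝ)^(Fintype.card V) := by positivity
  have hEC' : lam * (Fintype.card V : ℝ) ^ ((1 : ℝ)/3) ≤ (r : ℝ)/4 + (r : ℝ)/12 := by
    rw [← hEC]
    have : f j ≤ (r : ℝ)/4 + (r : ℝ)/12 := by
      have h5 : ((r:ℝ)/12) * (1 - (1/4 : ℝ)^(Fintype.card V)) ≤ (r:ℝ)/12 := by nlinarith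
      linarith
    linarith
  have hVpos : (0 : ℝ) < (Fintype.card V : ℝ) ^ ((1 : ℝ)/3) := by
    have hcV : 0 < Fintype.card V := Fintype.card_pos_iff.2 ⟨x₀⟩
    have : (0:ℝ) < (Fintype.card V : ℝ) := by exact_mod_cast hcV
    positivity
  have hprod : 0 < lam * (Fintype.card V : ℝ) ^ ((1 : ℝ)/3) := mul_pos hlam hVpos
  nlinarith [hEC', hrV, hprod]


end
end

section
/- Suppose a nonnegative function M = M(γ) on (0,1) satisfies M(0) = 0 and the differential inequality M ≥ B(γ + M²/2)·(∂M/∂γ) for all γ in (0,γ₀], where B ∈ (0,2) is a constant. Then M(γ)² ≤ 2γ(2-B)/B for all γ ∈ (0,γ₀]. -/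
/-- **Integrating the magnetization differential inequality.**  If `M ≥ 0` is increasing and
differentiable on `[0,γ₀]` with `M 0 = 0` and satisfies
`M ≥ B (γ + M²/2) M'` on `(0,γ₀]` for a constant `B ∈ (0,2)`, then
`M(γ)² ≤ 2γ(2-B)/B` on `(0,γ₀]`. -/
theorem magnetization_diff_ineq_integration
    (γ₀ B : ℝ) (hγ₀ : 0 < γ₀) (hB0 : 0 < B) (hB2 : B < 2)
    (M : ℝ → ℝ)
    (hM0 : M 0 = 0)
    (hMnonneg : ∀ γ ∈ Set.Icc 0 γ₀, 0 ≤ M γ)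
    (hMdiff : ∀ γ ∈ Set.Icc 0 γ₀, DifferentiableAt ℝ M γ)
    (hMmono : MonotoneOn M (Set.Icc 0 γ₀))
    (hODE : ∀ γ ∈ Set.Ioc 0 γ₀, B * (γ + (M γ) ^ 2 / 2) * deriv M γ ≤ M γ) :
    ∀ γ ∈ Set.Ioc 0 γ₀, (M γ) ^ 2 ≤ 2 * γ * (2 - B) / B := by
  have h2B : (0:ℝ) < 2 - B := by linarith
  -- core integration lemma
  have key : ∀ c : ℝ, 0 ≤ c → (∀ γ ∈ Set.Ioo 0 γ₀, c * M γ * deriv M γ ≤ 1) →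
      ∀ γ ∈ Set.Icc 0 γ₀, c * (M γ) ^ 2 ≤ 2 * γ := by
    intro c hc hder
    set f : ℝ → ℝ := fun x => c * (M x) ^ 2 - 2 * x with hf
    have hderiv : ∀ x ∈ Set.Icc 0 γ₀,
        HasDerivAt f (c * (2 * M x ^ 1 * deriv M x) - 2 * 1) x := by
      intro x hx
      exact ((((hMdiff x hx).hasDerivAt).pow 2).const_mul c).sub
        ((hasDerivAt_id x).const_mul 2)
    have hant : AntitoneOn f (Set.Icc 0 γ₀) := by
      apply antitoneOn_of_deriv_nonpos (convex_Icc 0 γ₀)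
      · intro x hx
        exact (hderiv x hx).differentiableAt.continuousAt.continuousWithinAt
      · intro x hx
        rw [interior_Icc] at hx
        exact (hderiv x (Set.Ioo_subset_Icc_self hx)).differentiableAt.differentiableWithinAt
      · intro x hx
        rw [interior_Icc] at hx
        rw [(hderiv x (Set.Ioo_subset_Icc_self hx)).deriv]
        have := hder x hx
        nlinarith [this]
    intro γ hγ
    have h0 : (0:ℝ) ∈ Set.Icc (0:ℝ) γ₀ := ⟨le_refl 0, hγ₀.le⟩
    have := hant h0 hγ hγ.1
    simp only [hf, hM0] at this
    nlinarith [this]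
  set L : ℝ := B / (2 - B) with hL
  have hLpos : 0 < L := div_pos hB0 h2B
  have hr0 : (0:ℝ) ≤ B / 2 := by linarith
  have hr1 : B / 2 < 1 := by linarith
  -- iteration
  have main : ∀ n : ℕ, ∀ γ ∈ Set.Icc 0 γ₀, L * (1 - (B/2) ^ n) * (M γ) ^ 2 ≤ 2 * γ := by
    intro n
    induction n with
    | zero => intro γ hγ; simp; linarith [hγ.1]
    | succ n ih =>
      have hanonneg : 0 ≤ L * (1 - (B/2) ^ n) := by
        have : (B/2) ^ n ≤ 1 := pow_le_one₀ hr0 hr1.le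
        nlinarith
      have hrec : L * (1 - (B/2) ^ (n+1)) = B * (1 + L * (1 - (B/2) ^ n)) / 2 := by
        rw [hL]; field_simp; ring
      rw [hrec]
      apply key
      · rw [← hrec]
        have : (B/2) ^ (n+1) ≤ 1 := pow_le_one₀ hr0 hr1.le
        nlinarith
      · intro γ hγ
        have hγIcc : γ ∈ Set.Icc 0 γ₀ := Set.Ioo_subset_Icc_self hγ
        have hMn : 0 ≤ M γ := hMnonneg γ hγIcc
        set d := deriv M γ with hd
        set A := L * (1 - (B/2) ^ n) with hA
        rcases le_or_gt d 0 with hdle | hdpos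
        · have : B * (1 + A) / 2 * M γ * d ≤ 0 := by
            apply mul_nonpos_of_nonneg_of_nonpos _ hdle
            positivity
          linarith
        · rcases eq_or_lt_of_le hMn with hMz | hMpos
          · rw [← hMz]; norm_num
          have hode := hODE γ ⟨hγ.1, hγ.2.le⟩
          have hIH := ih γ hγIcc
          -- A * M² ≤ 2γ, so B(1+A)/2 * M² * d ≤ B(γ + M²/2) d ≤ M
          have h1 : B * (1 + A) / 2 * (M γ) ^ 2 * d ≤ M γ := by
            nlinarith [mul_le_mul_of_nonneg_left hIH (by positivity : (0:ℝ) ≤ B * d / 2)]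
          rw [← mul_le_mul_iff_of_pos_right hMpos]
          nlinarith [h1]
  intro γ hγ
  have hγIcc : γ ∈ Set.Icc 0 γ₀ := ⟨hγ.1.le, hγ.2⟩
  have hlim : Filter.Tendsto (fun n : ℕ => L * (1 - (B/2) ^ n) * (M γ) ^ 2)
      Filter.atTop (nhds (L * (1 - 0) * (M γ) ^ 2)) := by
    apply Filter.Tendsto.mul_const
    apply Filter.Tendsto.const_mul
    exact (tendsto_pow_atTop_nhds_zero_of_lt_one hr0 hr1).const_sub 1
  have hfin : L * (1 - 0) * (M γ) ^ 2 ≤ 2 * γ :=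
    le_of_tendsto hlim (Filter.Eventually.of_forall fun n => main n γ hγIcc)
  rw [hL] at hfin
  have hfin' : B * M γ ^ 2 ≤ 2 * γ * (2 - B) := by
    have h := mul_le_mul_of_nonneg_right hfin h2B.le
    field_simp at h
    linarith
  rw [le_div_iff₀ hB0]
  linarith
end

section
/- Let M(p, γ) be a function which is nondecreasing in each variable separately on [p₀,p₁]×[γ₀,γ₁], and suppose the differential inequality 0 ≤ (1/M)(∂M/∂γ) + (1/γ)(∂/∂p)[(A/2)pM − p] holds pointwise. Then integrating over [p₀,p₁]×[γ₀,γ₁] yields 0 ≤ (p₁ − p₀)·log(M(p₁,γ₁)/M(p₀,γ₀)) + log(γ₁/γ₀)·[(A/2)p₁M(p₁,γ₁) − (p₁ − p₀)]. -/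
open Set

/-- **Extrapolation inequality.**  Let `M` be a positive `C¹` function on
`[p₀,p₁] × [γ₀,γ₁]`, nondecreasing in each variable separately, with partial derivatives
`Mp` (in `p`) and `Mg` (in `γ`), satisfying pointwise
`0 ≤ (1/M) ∂M/∂γ + (1/γ) ∂/∂p[(A/2) p M − p]`.
Then `0 ≤ (p₁−p₀) log(M(p₁,γ₁)/M(p₀,γ₀)) + log(γ₁/γ₀) [(A/2) p₁ M(p₁,γ₁) − (p₁−p₀)]`. -/
theorem extrapolation_inequality
    (M Mp Mg : ℝ → ℝ → ℝ) (A p₀ p₁ γ₀ γ₁ : ℝ)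
    (hA : 0 < A) (hp₀ : 0 < p₀) (hp : p₀ < p₁) (hγ₀ : 0 < γ₀) (hγ : γ₀ < γ₁)
    (hpos : ∀ p ∈ Icc p₀ p₁, ∀ γ ∈ Icc γ₀ γ₁, 0 < M p γ)
    (hmono_p : ∀ γ ∈ Icc γ₀ γ₁, MonotoneOn (fun p => M p γ) (Icc p₀ p₁))
    (hmono_γ : ∀ p ∈ Icc p₀ p₁, MonotoneOn (fun γ => M p γ) (Icc γ₀ γ₁))
    (hderiv_p : ∀ p ∈ Icc p₀ p₁, ∀ γ ∈ Icc γ₀ γ₁, HasDerivAt (fun q => M q γ) (Mp p γ) p)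
    (hderiv_γ : ∀ p ∈ Icc p₀ p₁, ∀ γ ∈ Icc γ₀ γ₁, HasDerivAt (fun s => M p s) (Mg p γ) γ)
    (hC1_p : ContinuousOn (fun q : ℝ × ℝ => Mp q.1 q.2) (Icc p₀ p₁ ×ˢ Icc γ₀ γ₁))
    (hC1_γ : ContinuousOn (fun q : ℝ × ℝ => Mg q.1 q.2) (Icc p₀ p₁ ×ˢ Icc γ₀ γ₁))
    (hineq : ∀ p ∈ Icc p₀ p₁, ∀ γ ∈ Icc γ₀ γ₁,
      0 ≤ (1 / M p γ) * Mg p γ + (1 / γ) * ((A / 2) * (M p γ + p * Mp p γ) - 1)) :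
    0 ≤ (p₁ - p₀) * Real.log (M p₁ γ₁ / M p₀ γ₀)
        + Real.log (γ₁ / γ₀) * ((A / 2) * p₁ * M p₁ γ₁ - (p₁ - p₀)) := by
  have hp₀m : p₀ ∈ Icc p₀ p₁ := ⟨le_rfl, hp.le⟩
  have hp₁m : p₁ ∈ Icc p₀ p₁ := ⟨hp.le, le_rfl⟩
  have hγ₀m : γ₀ ∈ Icc γ₀ γ₁ := ⟨le_rfl, hγ.le⟩
  have hγ₁m : γ₁ ∈ Icc γ₀ γ₁ := ⟨hγ.le, le_rfl⟩
  have hRcomp : IsCompact (Icc p₀ p₁ ×ˢ Icc γ₀ γ₁) := isCompact_Icc.prod isCompact_Icc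
  -- slice continuity of M
  have hMcont_p : ∀ γ ∈ Icc γ₀ γ₁, ContinuousOn (fun q => M q γ) (Icc p₀ p₁) :=
    fun γ hγm p hpm => ((hderiv_p p hpm γ hγm).continuousAt).continuousWithinAt
  have hMcont_γ : ∀ p ∈ Icc p₀ p₁, ContinuousOn (fun s => M p s) (Icc γ₀ γ₁) :=
    fun p hpm γ hγm => ((hderiv_γ p hpm γ hγm).continuousAt).continuousWithinAt
  -- slice continuity of partial derivatives
  have hMpcont : ∀ γ ∈ Icc γ₀ γ₁, ContinuousOn (fun q => Mp q γ) (Icc p₀ p₁) := by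
    intro γ hγm
    exact hC1_p.comp ((continuous_id.prodMk continuous_const).continuousOn)
      (fun q hq => ⟨hq, hγm⟩)
  have hMgcont : ∀ p ∈ Icc p₀ p₁, ContinuousOn (fun s => Mg p s) (Icc γ₀ γ₁) := by
    intro p hpm
    exact hC1_γ.comp ((continuous_const.prodMk continuous_id).continuousOn)
      (fun s hs => ⟨hpm, hs⟩)
  -- joint continuity of M (Lipschitz via mean value theorem)
  obtain ⟨Cp, hCp⟩ := hRcomp.exists_bound_of_continuousOn hC1_p
  obtain ⟨Cg, hCg⟩ := hRcomp.exists_bound_of_continuousOn hC1_γ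
  have contM : ContinuousOn (fun q : ℝ × ℝ => M q.1 q.2) (Icc p₀ p₁ ×ˢ Icc γ₀ γ₁) := by
    have key : ∀ q ∈ Icc p₀ p₁ ×ˢ Icc γ₀ γ₁, ∀ q' ∈ Icc p₀ p₁ ×ˢ Icc γ₀ γ₁,
        dist (M q.1 q.2) (M q'.1 q'.2) ≤ (|Cp| + |Cg|) * dist q q' := by
      rintro ⟨p, γ⟩ ⟨hpm, hγm⟩ ⟨p', γ'⟩ ⟨hpm', hγm'⟩
      simp only at hpm hγm hpm' hγm' ⊢
      have h1 : ‖M p γ - M p γ'‖ ≤ |Cg| * ‖γ - γ'‖ :=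
        (convex_Icc γ₀ γ₁).norm_image_sub_le_of_norm_hasDerivWithin_le
          (f' := fun s => Mg p s)
          (fun x hx => (hderiv_γ p hpm x hx).hasDerivWithinAt)
          (fun x hx => (hCg (p, x) ⟨hpm, hx⟩).trans (le_abs_self Cg)) hγm' hγm
      have h2 : ‖M p γ' - M p' γ'‖ ≤ |Cp| * ‖p - p'‖ :=
        (convex_Icc p₀ p₁).norm_image_sub_le_of_norm_hasDerivWithin_le
          (f' := fun q => Mp q γ')
          (fun x hx => (hderiv_p x hx γ' hγm').hasDerivWithinAt)
          (fun x hx => (hCp (x, γ') ⟨hx, hγm'⟩).trans (le_abs_self Cp)) hpm' hpm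
      have hd1 : ‖γ - γ'‖ ≤ dist (p, γ) (p', γ') := by
        rw [Prod.dist_eq]
        exact le_max_of_le_right (le_of_eq (by rw [Real.dist_eq, Real.norm_eq_abs]))
      have hd2 : ‖p - p'‖ ≤ dist (p, γ) (p', γ') := by
        rw [Prod.dist_eq]
        exact le_max_of_le_left (le_of_eq (by rw [Real.dist_eq, Real.norm_eq_abs]))
      calc dist (M p γ) (M p' γ')
          ≤ dist (M p γ) (M p γ') + dist (M p γ') (M p' γ') := dist_triangle _ _ _
        _ = ‖M p γ - M p γ'‖ + ‖M p γ' - M p' γ'‖ := by rw [Real.dist_eq, Real.dist_eq]; rfl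
        _ ≤ |Cg| * ‖γ - γ'‖ + |Cp| * ‖p - p'‖ := add_le_add h1 h2
        _ ≤ |Cg| * dist (p, γ) (p', γ') + |Cp| * dist (p, γ) (p', γ') :=
            add_le_add (mul_le_mul_of_nonneg_left hd1 (abs_nonneg _))
              (mul_le_mul_of_nonneg_left hd2 (abs_nonneg _))
        _ = (|Cp| + |Cg|) * dist (p, γ) (p', γ') := by ring
    have hK : ((|Cp| + |Cg|).toNNReal : ℝ) = |Cp| + |Cg| :=
      Real.coe_toNNReal _ (by positivity)
    refine LipschitzOnWith.continuousOn (K := (|Cp| + |Cg|).toNNReal) ?_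
    rw [lipschitzOnWith_iff_dist_le_mul]
    intro x hx y hy
    rw [hK]
    exact key x hx y hy
  -- joint continuity of Mg/M
  have hMne : ∀ q ∈ Icc p₀ p₁ ×ˢ Icc γ₀ γ₁, M q.1 q.2 ≠ 0 :=
    fun q hq => (hpos q.1 hq.1 q.2 hq.2).ne'
  have contf : ContinuousOn (fun q : ℝ × ℝ => Mg q.1 q.2 / M q.1 q.2)
      (Icc p₀ p₁ ×ˢ Icc γ₀ γ₁) := hC1_γ.div contM hMne
  -- integrability on the rectangle
  have hint : MeasureTheory.Integrable (Function.uncurry fun p γ => Mg p γ / M p γ)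
      ((MeasureTheory.volume.restrict (Ioc p₀ p₁)).prod
        (MeasureTheory.volume.restrict (Ioc γ₀ γ₁))) := by
    rw [MeasureTheory.Measure.prod_restrict, ← MeasureTheory.Measure.volume_eq_prod]
    have h1 : MeasureTheory.IntegrableOn (fun q : ℝ × ℝ => Mg q.1 q.2 / M q.1 q.2)
        (Icc p₀ p₁ ×ˢ Icc γ₀ γ₁) MeasureTheory.volume :=
      contf.integrableOn_compact hRcomp
    exact (h1.mono_set (prod_mono Ioc_subset_Icc_self Ioc_subset_Icc_self))
  -- Fubini
  have swap' : (∫ p in p₀..p₁, ∫ γ in γ₀..γ₁, Mg p γ / M p γ)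
      = ∫ γ in γ₀..γ₁, ∫ p in p₀..p₁, Mg p γ / M p γ := by
    simp only [intervalIntegral.integral_of_le hp.le, intervalIntegral.integral_of_le hγ.le]
    exact MeasureTheory.integral_integral_swap hint
  -- FTC in γ
  have inner_eq : ∀ p ∈ Icc p₀ p₁,
      (∫ γ in γ₀..γ₁, Mg p γ / M p γ) = Real.log (M p γ₁) - Real.log (M p γ₀) := by
    intro p hpm
    refine intervalIntegral.integral_eq_sub_of_hasDerivAt (f := fun s => Real.log (M p s)) ?_ ?_
    · intro γ hγm
      rw [uIcc_of_le hγ.le] at hγm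
      exact (hderiv_γ p hpm γ hγm).log (hpos p hpm γ hγm).ne'
    · apply ContinuousOn.intervalIntegrable
      rw [uIcc_of_le hγ.le]
      exact (hMgcont p hpm).div (hMcont_γ p hpm) (fun γ hγm => (hpos p hpm γ hγm).ne')
  -- FTC in p
  have ftc_p : ∀ γ ∈ Icc γ₀ γ₁,
      (∫ q in p₀..p₁, (M q γ + q * Mp q γ)) = p₁ * M p₁ γ - p₀ * M p₀ γ := by
    intro γ hγm
    refine intervalIntegral.integral_eq_sub_of_hasDerivAt (f := fun x => x * M x γ) ?_ ?_
    · intro q hqm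
      rw [uIcc_of_le hp.le] at hqm
      have : HasDerivAt (fun x => x * M x γ) (1 * M q γ + q * Mp q γ) q :=
        (hasDerivAt_id' q).mul (hderiv_p q hqm γ hγm)
      simpa [add_comm] using this
    · apply ContinuousOn.intervalIntegrable
      rw [uIcc_of_le hp.le]
      exact (hMcont_p γ hγm).add (continuousOn_id.mul (hMpcont γ hγm))
  set c : ℝ := (p₁ - p₀) - A / 2 * (p₁ * M p₁ γ₁) with hc
  -- lower bound for the inner p-integral
  have keyγ : ∀ γ ∈ Icc γ₀ γ₁,
      c * (1 / γ) ≤ ∫ p in p₀..p₁, Mg p γ / M p γ := by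
    intro γ hγm
    have hγpos : 0 < γ := lt_of_lt_of_le hγ₀ hγm.1
    have int1 : IntervalIntegrable
        (fun p => (1 / γ) * (1 - A / 2 * (M p γ + p * Mp p γ)))
        MeasureTheory.volume p₀ p₁ := by
      apply ContinuousOn.intervalIntegrable
      rw [uIcc_of_le hp.le]
      exact continuousOn_const.mul (continuousOn_const.sub (continuousOn_const.mul
        ((hMcont_p γ hγm).add (continuousOn_id.mul (hMpcont γ hγm)))))
    have int2 : IntervalIntegrable (fun p => Mg p γ / M p γ)
        MeasureTheory.volume p₀ p₁ := by
      apply ContinuousOn.intervalIntegrable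
      rw [uIcc_of_le hp.le]
      have : ContinuousOn (fun q => Mg q γ) (Icc p₀ p₁) :=
        hC1_γ.comp ((continuous_id.prodMk continuous_const).continuousOn)
          (fun q hq => ⟨hq, hγm⟩)
      exact this.div (hMcont_p γ hγm) (fun q hq => (hpos q hq γ hγm).ne')
    have step1 : (∫ p in p₀..p₁, (1 / γ) * (1 - A / 2 * (M p γ + p * Mp p γ)))
        ≤ ∫ p in p₀..p₁, Mg p γ / M p γ := by
      apply intervalIntegral.integral_mono_on hp.le int1 int2
      intro p hpm
      have h := hineq p hpm γ hγm
      have e1 : (1 / M p γ) * Mg p γ = Mg p γ / M p γ := one_div_mul_eq_div _ _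
      have e2 : (1 / γ) * (1 - A / 2 * (M p γ + p * Mp p γ))
          = -((1 / γ) * ((A / 2) * (M p γ + p * Mp p γ) - 1)) := by ring
      rw [e2, ← e1]
      linarith [h]
    have step2 : (∫ p in p₀..p₁, (1 / γ) * (1 - A / 2 * (M p γ + p * Mp p γ)))
        = (1 / γ) * ((p₁ - p₀) - A / 2 * (p₁ * M p₁ γ - p₀ * M p₀ γ)) := by
      rw [intervalIntegral.integral_const_mul]
      congr 1
      have intB : IntervalIntegrable (fun p => A / 2 * (M p γ + p * Mp p γ))
          MeasureTheory.volume p₀ p₁ := by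
        apply ContinuousOn.intervalIntegrable
        rw [uIcc_of_le hp.le]
        exact continuousOn_const.mul ((hMcont_p γ hγm).add (continuousOn_id.mul (hMpcont γ hγm)))
      rw [intervalIntegral.integral_sub intervalIntegrable_const intB,
        intervalIntegral.integral_const_mul, ftc_p γ hγm]
      simp
    have hX : c ≤ (p₁ - p₀) - A / 2 * (p₁ * M p₁ γ - p₀ * M p₀ γ) := by
      rw [hc]
      have h1 : M p₁ γ ≤ M p₁ γ₁ := hmono_γ p₁ hp₁m hγm hγ₁m hγm.2
      have h2 : 0 < M p₀ γ := hpos p₀ hp₀m γ hγm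
      have h3 : p₁ * M p₁ γ - p₀ * M p₀ γ ≤ p₁ * M p₁ γ₁ := by
        nlinarith [mul_le_mul_of_nonneg_left h1 (le_of_lt (hp₀.trans hp)), mul_pos hp₀ h2]
      have h4 := mul_le_mul_of_nonneg_left h3 (by positivity : (0:ℝ) ≤ A / 2)
      linarith
    calc c * (1 / γ) ≤ ((p₁ - p₀) - A / 2 * (p₁ * M p₁ γ - p₀ * M p₀ γ)) * (1 / γ) := by
          apply mul_le_mul_of_nonneg_right hX (by positivity)
      _ = (1 / γ) * ((p₁ - p₀) - A / 2 * (p₁ * M p₁ γ - p₀ * M p₀ γ)) := by ring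
      _ = ∫ p in p₀..p₁, (1 / γ) * (1 - A / 2 * (M p γ + p * Mp p γ)) := step2.symm
      _ ≤ _ := step1
  -- integrability of inner p-integral as a function of γ
  have intInner : IntervalIntegrable (fun γ => ∫ p in p₀..p₁, Mg p γ / M p γ)
      MeasureTheory.volume γ₀ γ₁ := by
    rw [intervalIntegrable_iff_integrableOn_Ioc_of_le hγ.le]
    have h := hint.integral_prod_right
    have h2 : MeasureTheory.IntegrableOn
        (fun γ => ∫ p in Ioc p₀ p₁, Mg p γ / M p γ) (Ioc γ₀ γ₁) MeasureTheory.volume := h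
    simpa [intervalIntegral.integral_of_le hp.le] using h2
  have intLow : IntervalIntegrable (fun γ => c * (1 / γ)) MeasureTheory.volume γ₀ γ₁ := by
    apply ContinuousOn.intervalIntegrable
    rw [uIcc_of_le hγ.le]
    exact continuousOn_const.mul (continuousOn_const.div continuousOn_id
      (fun γ hγm => (lt_of_lt_of_le hγ₀ hγm.1).ne'))
  -- lower bound for the double integral
  have Dlow : c * (Real.log γ₁ - Real.log γ₀)
      ≤ ∫ γ in γ₀..γ₁, ∫ p in p₀..p₁, Mg p γ / M p γ := by
    have hmono := intervalIntegral.integral_mono_on hγ.le intLow intInner keyγ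
    have e : (∫ γ in γ₀..γ₁, c * (1 / γ)) = c * (Real.log γ₁ - Real.log γ₀) := by
      rw [intervalIntegral.integral_const_mul,
        integral_one_div_of_pos hγ₀ (hγ₀.trans hγ),
        Real.log_div (ne_of_gt (hγ₀.trans hγ)) hγ₀.ne']
    linarith [hmono, e.le, e.ge]
  -- upper bound for the double integral
  have hM00 : 0 < M p₀ γ₀ := hpos _ hp₀m _ hγ₀m
  have hM11 : 0 < M p₁ γ₁ := hpos _ hp₁m _ hγ₁m
  have Dup : (∫ γ in γ₀..γ₁, ∫ p in p₀..p₁, Mg p γ / M p γ)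
      ≤ (p₁ - p₀) * (Real.log (M p₁ γ₁) - Real.log (M p₀ γ₀)) := by
    rw [← swap']
    have e1 : (∫ p in p₀..p₁, ∫ γ in γ₀..γ₁, Mg p γ / M p γ)
        = ∫ p in p₀..p₁, (Real.log (M p γ₁) - Real.log (M p γ₀)) := by
      apply intervalIntegral.integral_congr
      intro p hpm
      rw [uIcc_of_le hp.le] at hpm
      exact inner_eq p hpm
    rw [e1]
    have intg : IntervalIntegrable
        (fun p => Real.log (M p γ₁) - Real.log (M p γ₀)) MeasureTheory.volume p₀ p₁ := by
      apply ContinuousOn.intervalIntegrable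
      rw [uIcc_of_le hp.le]
      exact ((hMcont_p γ₁ hγ₁m).log (fun q hq => (hpos q hq γ₁ hγ₁m).ne')).sub
        ((hMcont_p γ₀ hγ₀m).log (fun q hq => (hpos q hq γ₀ hγ₀m).ne'))
    calc (∫ p in p₀..p₁, (Real.log (M p γ₁) - Real.log (M p γ₀)))
        ≤ ∫ _p in p₀..p₁, (Real.log (M p₁ γ₁) - Real.log (M p₀ γ₀)) := by
          apply intervalIntegral.integral_mono_on hp.le intg intervalIntegrable_const
          intro p hpm
          have h1 : M p γ₁ ≤ M p₁ γ₁ := hmono_p γ₁ hγ₁m hpm hp₁m hpm.2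
          have h2 : M p₀ γ₀ ≤ M p γ₀ := hmono_p γ₀ hγ₀m hp₀m hpm hpm.1
          have l1 : Real.log (M p γ₁) ≤ Real.log (M p₁ γ₁) :=
            Real.log_le_log (hpos p hpm γ₁ hγ₁m) h1
          have l2 : Real.log (M p₀ γ₀) ≤ Real.log (M p γ₀) :=
            Real.log_le_log hM00 h2
          linarith
      _ = (p₁ - p₀) * (Real.log (M p₁ γ₁) - Real.log (M p₀ γ₀)) := by
          rw [intervalIntegral.integral_const]; ring_nf
  -- conclusion
  rw [Real.log_div hM11.ne' hM00.ne', Real.log_div (ne_of_gt (hγ₀.trans hγ)) hγ₀.ne']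
  have e : (Real.log γ₁ - Real.log γ₀) * (A / 2 * p₁ * M p₁ γ₁ - (p₁ - p₀))
      = -(c * (Real.log γ₁ - Real.log γ₀)) := by rw [hc]; ring
  linarith [Dlow, Dup]
end

section
/- For bond percolation, the derivative identity (1−p)·∂M/∂p = Σ_{x∼y} P_{p,γ}(x ∈ C(0), C(0) ∩ G = ∅, C(y) ∩ G ≠ ∅) holds, where the sum is over ordered pairs of adjacent vertices and M(p,γ) is the magnetization P_{p,γ}(0 ↔ G). -/
open Classical
set_option linter.unusedSectionVars false

noncomputable section

/-- The Bernoulli product weight of a green-vertex configuration. -/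
def siteWeight {V : Type*} [Fintype V] (γ : ℝ) (g : V → Bool) : ℝ :=
  ∏ v : V, if g v then γ else 1 - γ

/-- Probability in the joint bond/site model: bonds open with probability `p`,
vertices green with probability `γ`, all independently. -/
def jointProb {V : Type*} [Fintype V] [DecidableEq V] (p γ : ℝ)
    (S : Set ((Sym2 V → Bool) × (V → Bool))) : ℝ :=
  ∑ c : (Sym2 V → Bool) × (V → Bool),
    if c ∈ S then edgeWeight p c.1 * siteWeight γ c.2 else 0

section Aux

variable {V : Type*} [Fintype V] [DecidableEq V] {G : SimpleGraph V}

lemma conn_mono {ω ω' : Sym2 V → Bool} (h : ∀ e, ω e = true → ω' e = true)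
    {a b : V} (hc : Conn G ω a b) : Conn G ω' a b :=
  Relation.ReflTransGen.mono (fun _ _ hab => ⟨hab.1, h _ hab.2⟩) _ _ hc

lemma conn_update_mono {ω : Sym2 V → Bool} {e : Sym2 V} {a b : V}
    (hc : Conn G ω a b) : Conn G (Function.update ω e true) a b := by
  refine conn_mono (fun e' he' => ?_) hc
  by_cases h : e' = e
  · subst h; simp
  · simpa [Function.update_of_ne h] using he'

lemma conn_update_new {ω : Sym2 V → Bool} {x y : V} (hxy : G.Adj x y) :
    Conn G (Function.update ω s(x, y) true) x y :=
  Relation.ReflTransGen.single ⟨hxy, by simp⟩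

lemma conn_update_iff {ω : Sym2 V → Bool} {x y : V} (hxy : G.Adj x y) {a b : V} :
    Conn G (Function.update ω s(x, y) true) a b ↔
      Conn G ω a b ∨ (Conn G ω a x ∧ Conn G ω y b) ∨ (Conn G ω a y ∧ Conn G ω x b) := by
  constructor
  · intro hc
    induction hc with
    | refl => exact Or.inl Relation.ReflTransGen.refl
    | @tail c d hac hcd ih =>
      by_cases hcd' : ω s(c, d) = true
      · have step : OpenAdj G ω c d := ⟨hcd.1, hcd'⟩
        rcases ih with h | ⟨h1, h2⟩ | ⟨h1, h2⟩
        · exact Or.inl (h.tail step)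
        · exact Or.inr (Or.inl ⟨h1, h2.tail step⟩)
        · exact Or.inr (Or.inr ⟨h1, h2.tail step⟩)
      · have hecd : s(c, d) = s(x, y) := by
          by_contra hne
          exact hcd' (by simpa [Function.update_of_ne hne] using hcd.2)
        rcases Sym2.eq_iff.mp hecd with ⟨hcx, hdy⟩ | ⟨hcy, hdx⟩
        · subst hcx; subst hdy
          rcases ih with h | ⟨h1, h2⟩ | ⟨h1, h2⟩
          · exact Or.inr (Or.inl ⟨h, Relation.ReflTransGen.refl⟩)
          · exact Or.inr (Or.inl ⟨h1, Relation.ReflTransGen.refl⟩)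
          · exact Or.inl h1
        · subst hcy; subst hdx
          rcases ih with h | ⟨h1, h2⟩ | ⟨h1, h2⟩
          · exact Or.inr (Or.inr ⟨h, Relation.ReflTransGen.refl⟩)
          · exact Or.inl h1
          · exact Or.inr (Or.inr ⟨h1, Relation.ReflTransGen.refl⟩)
  · rintro (h | ⟨h1, h2⟩ | ⟨h1, h2⟩)
    · exact conn_update_mono h
    · exact ((conn_update_mono h1).trans (conn_update_new hxy)).trans (conn_update_mono h2)
    · have : Conn G (Function.update ω s(x, y) true) y x := by
        rw [Sym2.eq_swap]
        exact conn_update_new hxy.symm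
      have h1' : Conn G (Function.update ω s(x, y) true) a y := conn_update_mono h1
      exact (h1'.trans this).trans (conn_update_mono h2)

lemma conn_update_not_adj {ω : Sym2 V → Bool} {x y : V} (hxy : ¬ G.Adj x y) {a b : V} :
    Conn G (Function.update ω s(x, y) true) a b ↔ Conn G ω a b := by
  have key : ∀ u v : V, OpenAdj G (Function.update ω s(x, y) true) u v ↔ OpenAdj G ω u v := by
    intro u v
    by_cases h : s(u, v) = s(x, y)
    · constructor <;> rintro ⟨hadj, _⟩ <;> exfalso
      all_goals
        rcases Sym2.eq_iff.mp h with ⟨h1, h2⟩ | ⟨h1, h2⟩ <;> subst h1 <;> subst h2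
        · exact hxy hadj
        · exact hxy hadj.symm
    · simp [OpenAdj, Function.update_of_ne h]
  constructor
  · exact fun hc => Relation.ReflTransGen.mono (fun u v huv => (key u v).mp huv) _ _ hc
  · exact fun hc => Relation.ReflTransGen.mono (fun u v huv => (key u v).mpr huv) _ _ hc

lemma edgeWeight_hasDerivAt (ω : Sym2 V → Bool) (p : ℝ) :
    HasDerivAt (fun q => edgeWeight q ω)
      (∑ e : Sym2 V, (∏ e' ∈ Finset.univ.erase e, (if ω e' then p else 1 - p)) *
        (if ω e then 1 else -1)) p := by
  have h := HasDerivAt.fun_finset_prod (u := (Finset.univ : Finset (Sym2 V))) (x := p)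
    (f := fun e q => if ω e then q else 1 - q)
    (f' := fun e => if ω e then (1 : ℝ) else -1) ?_
  · simpa [edgeWeight, smul_eq_mul] using h
  · intro e _
    by_cases h : ω e
    · simpa [h] using hasDerivAt_id' p
    · simpa [h] using (hasDerivAt_id' p).const_sub 1

lemma flip_step (F : (Sym2 V → Bool) → ℝ) (p : ℝ) (e : Sym2 V) :
    (1 - p) * ∑ ω : Sym2 V → Bool,
      (∏ e' ∈ Finset.univ.erase e, (if ω e' then p else 1 - p)) * (if ω e then 1 else -1) * F ω
    = ∑ ω : Sym2 V → Bool,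
        if ω e = false then (F (Function.update ω e true) - F ω) * edgeWeight p ω else 0 := by
  classical
  set W : (Sym2 V → Bool) → ℝ := fun ω => ∏ e' ∈ Finset.univ.erase e, (if ω e' then p else 1 - p)
    with hW
  have hEW : ∀ ω : Sym2 V → Bool, ω e = false → edgeWeight p ω = (1 - p) * W ω := by
    intro ω hωe
    rw [edgeWeight, ← Finset.mul_prod_erase Finset.univ _ (Finset.mem_univ e), hωe]
    simp [W]
  set sT := Finset.univ.filter (fun ω : Sym2 V → Bool => ω e = true) with hsT
  set sF := Finset.univ.filter (fun ω : Sym2 V → Bool => ω e = false) with hsF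
  have key : ∑ ω ∈ sT, W ω * F ω = ∑ ω ∈ sF, W ω * F (Function.update ω e true) := by
    refine Finset.sum_nbij' (fun ω => Function.update ω e false)
      (fun ω => Function.update ω e true) ?_ ?_ ?_ ?_ ?_
    · intro ω hω; simp [hsF]
    · intro ω hω; simp [hsT]
    · intro ω hω
      simp only [hsT, Finset.mem_filter, Finset.mem_univ, true_and] at hω
      try dsimp only
      rw [Function.update_idem, ← hω, Function.update_eq_self]
    · intro ω hω
      simp only [hsF, Finset.mem_filter, Finset.mem_univ, true_and] at hω
      try dsimp only
      rw [Function.update_idem, ← hω, Function.update_eq_self]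
    · intro ω hω
      simp only [hsT, Finset.mem_filter, Finset.mem_univ, true_and] at hω
      have hWeq : W (Function.update ω e false) = W ω := by
        refine Finset.prod_congr rfl fun e' he' => ?_
        rw [Function.update_of_ne (Finset.ne_of_mem_erase he')]
      rw [hWeq, Function.update_idem, ← hω, Function.update_eq_self]
  have hfilter : Finset.univ.filter (fun ω : Sym2 V → Bool => ¬ ω e = true) = sF := by
    apply Finset.filter_congr; intro ω _; simp
  have hsplit : (∑ ω : Sym2 V → Bool, W ω * (if ω e then (1:ℝ) else -1) * F ω)
      = (∑ ω ∈ sT, W ω * F ω) - (∑ ω ∈ sF, W ω * F ω) := by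
    rw [← Finset.sum_filter_add_sum_filter_not Finset.univ (fun ω : Sym2 V → Bool => ω e = true),
      hfilter, ← hsT]
    have h1 : ∀ ω ∈ sT, W ω * (if ω e then (1:ℝ) else -1) * F ω = W ω * F ω := by
      intro ω hω
      simp only [hsT, Finset.mem_filter, Finset.mem_univ, true_and] at hω
      rw [if_pos hω]; ring
    have h2 : ∀ ω ∈ sF, W ω * (if ω e then (1:ℝ) else -1) * F ω = -(W ω * F ω) := by
      intro ω hω
      simp only [hsF, Finset.mem_filter, Finset.mem_univ, true_and] at hω
      rw [if_neg (by simp [hω])]; ring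
    rw [Finset.sum_congr rfl h1, Finset.sum_congr rfl h2, Finset.sum_neg_distrib]
    ring
  have hRHS : (∑ ω : Sym2 V → Bool,
        if ω e = false then (F (Function.update ω e true) - F ω) * edgeWeight p ω else 0)
      = ∑ ω ∈ sF, (F (Function.update ω e true) - F ω) * ((1 - p) * W ω) := by
    rw [hsF, Finset.sum_filter]
    refine Finset.sum_congr rfl fun ω _ => ?_
    by_cases hω : ω e = false
    · rw [if_pos hω, if_pos hω, hEW ω hω]
    · rw [if_neg hω, if_neg hω]
  rw [hsplit, hRHS, key, ← Finset.sum_sub_distrib, Finset.mul_sum]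
  refine Finset.sum_congr rfl fun ω _ => ?_
  ring

lemma greenfree_iff (ω : Sym2 V → Bool) (g : V → Bool) (x₀ : V) :
    (∀ z, Conn G ω x₀ z → g z = false) ↔ ¬(∃ z, Conn G ω x₀ z ∧ g z = true) := by
  push_neg
  constructor
  · intro h z hz; simp [h z hz]
  · intro h z hz; simpa using h z hz

lemma ev_closed {x y : V} (hxy : G.Adj x y) {ω : Sym2 V → Bool} {g : V → Bool} {x₀ : V}
    (h1 : Conn G ω x₀ x) (hgf : ∀ z, Conn G ω x₀ z → g z = false)
    (h3 : ∃ z, Conn G ω y z ∧ g z = true) : ω s(x, y) = false := by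
  by_contra h
  rw [Bool.not_eq_false] at h
  obtain ⟨z, hyz, hgz⟩ := h3
  have : Conn G ω x₀ z := (h1.trans (Relation.ReflTransGen.single ⟨hxy, h⟩)).trans hyz
  rw [hgf z this] at hgz
  exact Bool.false_ne_true hgz

lemma ev_disjoint {x y : V} {ω : Sym2 V → Bool} {g : V → Bool} {x₀ : V} :
    ¬((Conn G ω x₀ x ∧ (∀ z, Conn G ω x₀ z → g z = false) ∧ ∃ z, Conn G ω y z ∧ g z = true) ∧
      (Conn G ω x₀ y ∧ (∀ z, Conn G ω x₀ z → g z = false) ∧ ∃ z, Conn G ω x z ∧ g z = true)) := by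
  rintro ⟨⟨-, hgf, z, hyz, hgz⟩, ⟨h1y, -, -⟩⟩
  rw [hgf z (h1y.trans hyz)] at hgz
  exact Bool.false_ne_true hgz

lemma pivotal_iff {x y : V} (hxy : G.Adj x y) {ω : Sym2 V → Bool} (g : V → Bool) (x₀ : V) :
    ((∃ z, Conn G (Function.update ω s(x, y) true) x₀ z ∧ g z = true) ∧
      ¬(∃ z, Conn G ω x₀ z ∧ g z = true)) ↔
    ((Conn G ω x₀ x ∧ (∀ z, Conn G ω x₀ z → g z = false) ∧ ∃ z, Conn G ω y z ∧ g z = true) ∨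
     (Conn G ω x₀ y ∧ (∀ z, Conn G ω x₀ z → g z = false) ∧ ∃ z, Conn G ω x z ∧ g z = true)) := by
  constructor
  · rintro ⟨⟨z, hz, hgz⟩, hA⟩
    have hgf : ∀ w, Conn G ω x₀ w → g w = false := (greenfree_iff ω g x₀).mpr hA
    rcases (conn_update_iff hxy).mp hz with h | ⟨h1, h2⟩ | ⟨h1, h2⟩
    · rw [hgf z h] at hgz; exact absurd hgz Bool.false_ne_true
    · exact Or.inl ⟨h1, hgf, z, h2, hgz⟩
    · exact Or.inr ⟨h1, hgf, z, h2, hgz⟩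
  · rintro (⟨h1, hgf, z, hz, hgz⟩ | ⟨h1, hgf, z, hz, hgz⟩)
    · refine ⟨⟨z, ?_, hgz⟩, fun h => ?_⟩
      · exact ((conn_update_mono h1).trans (conn_update_new hxy)).trans (conn_update_mono hz)
      · exact absurd h ((greenfree_iff ω g x₀).mp hgf)
    · refine ⟨⟨z, ?_, hgz⟩, fun h => ?_⟩
      · have hyx : Conn G (Function.update ω s(x, y) true) y x := by
          rw [Sym2.eq_swap]; exact conn_update_new hxy.symm
        exact ((conn_update_mono h1).trans hyx).trans (conn_update_mono hz)
      · exact absurd h ((greenfree_iff ω g x₀).mp hgf)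

lemma ite_sub_eq {a b c d : Prop} (r : ℝ) (hmono : b → a)
    (hiff : a ∧ ¬b ↔ c ∨ d) (hdisj : ¬(c ∧ d)) :
    ((if a then r else 0) - if b then r else 0)
      = (if c then r else 0) + (if d then r else 0) := by
  by_cases hb : b
  · have ha := hmono hb
    have h : ¬(c ∨ d) := fun h => (hiff.mpr h).2 hb
    push_neg at h
    simp [ha, hb, h.1, h.2]
  · by_cases ha : a
    · rcases hiff.mp ⟨ha, hb⟩ with h | h
      · have hd : ¬d := fun hd => hdisj ⟨h, hd⟩
        simp [ha, hb, h, hd]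
      · have hc : ¬c := fun hc => hdisj ⟨hc, h⟩
        simp [ha, hb, h, hc]
    · have h : ¬(c ∨ d) := fun h => ha (hiff.mpr h).1
      push_neg at h
      simp [ha, hb, h.1, h.2]

def magF (G : SimpleGraph V) (γ : ℝ) (x₀ : V) (ω : Sym2 V → Bool) : ℝ :=
  ∑ g : V → Bool, if (∃ z, Conn G ω x₀ z ∧ g z = true) then siteWeight γ g else 0

lemma per_edge (p γ : ℝ) (x₀ x y : V) :
    (∑ ω : Sym2 V → Bool, if ω s(x, y) = false then
        (magF G γ x₀ (Function.update ω s(x, y) true) - magF G γ x₀ ω) * edgeWeight p ω else 0)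
    = (if G.Adj x y then jointProb p γ {c : (Sym2 V → Bool) × (V → Bool) |
          Conn G c.1 x₀ x ∧ (∀ z, Conn G c.1 x₀ z → c.2 z = false) ∧
          (∃ z, Conn G c.1 y z ∧ c.2 z = true)} else 0)
      + (if G.Adj y x then jointProb p γ {c : (Sym2 V → Bool) × (V → Bool) |
          Conn G c.1 x₀ y ∧ (∀ z, Conn G c.1 x₀ z → c.2 z = false) ∧
          (∃ z, Conn G c.1 x z ∧ c.2 z = true)} else 0) := by
  classical
  by_cases hadj : G.Adj x y
  · rw [if_pos hadj, if_pos hadj.symm]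
    have hJ : ∀ (a b : V), jointProb (V := V) p γ {c : (Sym2 V → Bool) × (V → Bool) |
          Conn G c.1 x₀ a ∧ (∀ z, Conn G c.1 x₀ z → c.2 z = false) ∧
          (∃ z, Conn G c.1 b z ∧ c.2 z = true)}
        = ∑ ω : Sym2 V → Bool, ∑ g : V → Bool,
            if (Conn G ω x₀ a ∧ (∀ z, Conn G ω x₀ z → g z = false) ∧
              (∃ z, Conn G ω b z ∧ g z = true)) then edgeWeight p ω * siteWeight γ g else 0 := by
      intro a b
      rw [jointProb, Fintype.sum_prod_type]
      refine Finset.sum_congr rfl fun ω _ => Finset.sum_congr rfl fun g _ => ?_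
      simp only [Set.mem_setOf_eq]
    rw [hJ x y, hJ y x, ← Finset.sum_add_distrib]
    refine Finset.sum_congr rfl fun ω _ => ?_
    rw [← Finset.sum_add_distrib]
    by_cases hω : ω s(x, y) = false
    · rw [if_pos hω, magF, magF, ← Finset.sum_sub_distrib, Finset.sum_mul]
      refine Finset.sum_congr rfl fun g _ => ?_
      have hiff := pivotal_iff (ω := ω) hadj g x₀
      have hmono : (∃ z, Conn G ω x₀ z ∧ g z = true) →
          (∃ z, Conn G (Function.update ω s(x, y) true) x₀ z ∧ g z = true) :=
        fun ⟨z, hz, hgz⟩ => ⟨z, conn_update_mono hz, hgz⟩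
      have hdisj := ev_disjoint (G := G) (x := x) (y := y) (ω := ω) (g := g) (x₀ := x₀)
      by_cases hb : (∃ z, Conn G ω x₀ z ∧ g z = true)
      · have ha := hmono hb
        have h1 : ¬(Conn G ω x₀ x ∧ (∀ z, Conn G ω x₀ z → g z = false) ∧
            ∃ z, Conn G ω y z ∧ g z = true) := fun h => (hiff.mpr (Or.inl h)).2 hb
        have h2 : ¬(Conn G ω x₀ y ∧ (∀ z, Conn G ω x₀ z → g z = false) ∧
            ∃ z, Conn G ω x z ∧ g z = true) := fun h => (hiff.mpr (Or.inr h)).2 hb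
        simp [ha, hb, h1, h2]
      · by_cases ha : (∃ z, Conn G (Function.update ω s(x, y) true) x₀ z ∧ g z = true)
        · rcases hiff.mp ⟨ha, hb⟩ with h | h
          · have h2 : ¬(Conn G ω x₀ y ∧ (∀ z, Conn G ω x₀ z → g z = false) ∧
                ∃ z, Conn G ω x z ∧ g z = true) := fun h2 => hdisj ⟨h, h2⟩
            simp [ha, hb, h.1, h.2.1, h.2.2, h2, mul_comm]
            try exact (if_pos h.2.1).symm
          · have h1 : ¬(Conn G ω x₀ x ∧ (∀ z, Conn G ω x₀ z → g z = false) ∧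
                ∃ z, Conn G ω y z ∧ g z = true) := fun h1 => hdisj ⟨h1, h⟩
            simp [ha, hb, h.1, h.2.1, h.2.2, h1, mul_comm]
            try exact (if_pos h.2.1).symm
        · have h1 : ¬(Conn G ω x₀ x ∧ (∀ z, Conn G ω x₀ z → g z = false) ∧
            ∃ z, Conn G ω y z ∧ g z = true) := fun h => ha (hiff.mpr (Or.inl h)).1
          have h2 : ¬(Conn G ω x₀ y ∧ (∀ z, Conn G ω x₀ z → g z = false) ∧
            ∃ z, Conn G ω x z ∧ g z = true) := fun h => ha (hiff.mpr (Or.inr h)).1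
          simp [ha, hb, h1, h2]
    · rw [if_neg hω]
      refine (Finset.sum_eq_zero fun g _ => ?_).symm
      have h1 : ¬(Conn G ω x₀ x ∧ (∀ z, Conn G ω x₀ z → g z = false) ∧
          ∃ z, Conn G ω y z ∧ g z = true) :=
        fun ⟨ha, hb, hc⟩ => hω (ev_closed hadj ha hb hc)
      have h2 : ¬(Conn G ω x₀ y ∧ (∀ z, Conn G ω x₀ z → g z = false) ∧
          ∃ z, Conn G ω x z ∧ g z = true) := by
        rintro ⟨ha, hb, hc⟩
        apply hω
        rw [Sym2.eq_swap]
        exact ev_closed hadj.symm ha hb hc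
      simp [h1, h2]
  · rw [if_neg hadj, if_neg (fun h => hadj h.symm), add_zero]
    refine Finset.sum_eq_zero fun ω _ => ?_
    by_cases hω : ω s(x, y) = false
    · rw [if_pos hω]
      have : magF G γ x₀ (Function.update ω s(x, y) true) = magF G γ x₀ ω := by
        refine Finset.sum_congr rfl fun g _ => ?_
        refine if_congr ?_ rfl rfl
        constructor <;> rintro ⟨z, hz, hgz⟩
        · exact ⟨z, (conn_update_not_adj hadj).mp hz, hgz⟩
        · exact ⟨z, (conn_update_not_adj hadj).mpr hz, hgz⟩
      rw [this, sub_self, zero_mul]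
    · rw [if_neg hω]

lemma fiber_eq (p γ : ℝ) (x₀ : V) (e : Sym2 V) :
    (∑ ω : Sym2 V → Bool, if ω e = false then
        (magF G γ x₀ (Function.update ω e true) - magF G γ x₀ ω) * edgeWeight p ω else 0)
    = ∑ pr ∈ Finset.univ.filter (fun pr : V × V => s(pr.1, pr.2) = e),
        (if G.Adj pr.1 pr.2 then jointProb p γ {c : (Sym2 V → Bool) × (V → Bool) |
            Conn G c.1 x₀ pr.1 ∧ (∀ z, Conn G c.1 x₀ z → c.2 z = false) ∧
            (∃ z, Conn G c.1 pr.2 z ∧ c.2 z = true)} else 0) := by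
  induction e using Sym2.ind with
  | _ x y =>
    rw [per_edge p γ x₀ x y]
    by_cases hxy : x = y
    · subst hxy
      have hfil : Finset.univ.filter (fun pr : V × V => s(pr.1, pr.2) = s(x, x)) = {(x, x)} := by
        ext ⟨a, b⟩
        simp [Sym2.eq_iff, Prod.ext_iff]
      rw [hfil, Finset.sum_singleton]
      simp
    · have hfil : Finset.univ.filter (fun pr : V × V => s(pr.1, pr.2) = s(x, y))
          = {(x, y), (y, x)} := by
        ext ⟨a, b⟩
        simp only [Finset.mem_filter, Finset.mem_univ, true_and, Finset.mem_insert,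
          Finset.mem_singleton, Sym2.eq_iff, Prod.mk.injEq]
      have hne : ((x, y) : V × V) ≠ (y, x) := by
        intro h
        rw [Prod.mk.injEq] at h
        exact hxy h.1
      rw [hfil, Finset.sum_pair hne]

theorem magDerivAux (G : SimpleGraph V) (p γ : ℝ) (x₀ : V) :
    (1 - p) * deriv (fun q => jointProb q γ {c : (Sym2 V → Bool) × (V → Bool) |
        ∃ y, Conn G c.1 x₀ y ∧ c.2 y = true}) p
      = ∑ x : V, ∑ y : V,
          if G.Adj x y then
            jointProb p γ {c : (Sym2 V → Bool) × (V → Bool) |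
              Conn G c.1 x₀ x ∧ (∀ z, Conn G c.1 x₀ z → c.2 z = false) ∧
              (∃ z, Conn G c.1 y z ∧ c.2 z = true)}
          else 0 := by
  classical
  have hM : ∀ q : ℝ, jointProb (V := V) q γ {c : (Sym2 V → Bool) × (V → Bool) |
        ∃ y, Conn G c.1 x₀ y ∧ c.2 y = true}
      = ∑ ω : Sym2 V → Bool, edgeWeight q ω * magF G γ x₀ ω := by
    intro q
    rw [jointProb, Fintype.sum_prod_type]
    refine Finset.sum_congr rfl fun ω _ => ?_
    rw [magF, Finset.mul_sum]
    refine Finset.sum_congr rfl fun g _ => ?_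
    simp only [Set.mem_setOf_eq, mul_ite, mul_zero]
  have hderiv : HasDerivAt (fun q => jointProb (V := V) q γ {c : (Sym2 V → Bool) × (V → Bool) |
        ∃ y, Conn G c.1 x₀ y ∧ c.2 y = true})
      (∑ ω : Sym2 V → Bool, (∑ e : Sym2 V,
        (∏ e' ∈ Finset.univ.erase e, (if ω e' then p else 1 - p)) * (if ω e then 1 else -1))
        * magF G γ x₀ ω) p := by
    have heq : (fun q => jointProb (V := V) q γ {c : (Sym2 V → Bool) × (V → Bool) |
        ∃ y, Conn G c.1 x₀ y ∧ c.2 y = true})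
        = fun q => ∑ ω : Sym2 V → Bool, edgeWeight q ω * magF G γ x₀ ω := funext hM
    rw [heq]
    exact HasDerivAt.fun_sum fun ω _ => (edgeWeight_hasDerivAt ω p).mul_const _
  rw [hderiv.deriv]
  have hswap : (1 - p) * (∑ ω : Sym2 V → Bool, (∑ e : Sym2 V,
        (∏ e' ∈ Finset.univ.erase e, (if ω e' then p else 1 - p)) * (if ω e then 1 else -1))
        * magF G γ x₀ ω)
      = ∑ e : Sym2 V, (1 - p) * ∑ ω : Sym2 V → Bool,
          (∏ e' ∈ Finset.univ.erase e, (if ω e' then p else 1 - p)) * (if ω e then 1 else -1)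
            * magF G γ x₀ ω := by
    rw [Finset.mul_sum]
    have inner : ∀ ω : Sym2 V → Bool, (1 - p) * ((∑ e : Sym2 V,
        (∏ e' ∈ Finset.univ.erase e, (if ω e' then p else 1 - p)) * (if ω e then 1 else -1))
          * magF G γ x₀ ω)
        = ∑ e : Sym2 V, (1 - p) *
            ((∏ e' ∈ Finset.univ.erase e, (if ω e' then p else 1 - p)) * (if ω e then 1 else -1)
              * magF G γ x₀ ω) := by
      intro ω
      rw [Finset.sum_mul, Finset.mul_sum]
    rw [Finset.sum_congr rfl fun ω _ => inner ω, Finset.sum_comm]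
    refine Finset.sum_congr rfl fun e _ => ?_
    rw [Finset.mul_sum]
  rw [hswap]
  have hstep : ∀ e : Sym2 V, (1 - p) * ∑ ω : Sym2 V → Bool,
      (∏ e' ∈ Finset.univ.erase e, (if ω e' then p else 1 - p)) * (if ω e then 1 else -1)
        * magF G γ x₀ ω
      = ∑ pr ∈ Finset.univ.filter (fun pr : V × V => s(pr.1, pr.2) = e),
        (if G.Adj pr.1 pr.2 then jointProb p γ {c : (Sym2 V → Bool) × (V → Bool) |
            Conn G c.1 x₀ pr.1 ∧ (∀ z, Conn G c.1 x₀ z → c.2 z = false) ∧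
            (∃ z, Conn G c.1 pr.2 z ∧ c.2 z = true)} else 0) := by
    intro e
    rw [flip_step (magF G γ x₀) p e, fiber_eq p γ x₀ e]
  rw [Finset.sum_congr rfl fun e _ => hstep e]
  rw [Finset.sum_fiberwise Finset.univ (fun pr : V × V => s(pr.1, pr.2))]
  rw [Fintype.sum_prod_type]

end Aux

/-- **Russo-type derivative formula for the magnetization.**
`(1−p) ∂M/∂p = ∑_{x∼y} P_{p,γ}(x ∈ C(0), C(0) ∩ G = ∅, C(y) ∩ G ≠ ∅)`,
where the sum is over ordered pairs of adjacent vertices and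
`M(p,γ) = P_{p,γ}(0 ↔ G)`. -/
theorem magnetization_derivative_formula {V : Type*} [Fintype V] [DecidableEq V]
    (G : SimpleGraph V) (p γ : ℝ) (hp0 : 0 ≤ p) (hp1 : p ≤ 1)
    (hγ0 : 0 ≤ γ) (hγ1 : γ ≤ 1) (x₀ : V) :
    (1 - p) * deriv (fun q => jointProb q γ {c : (Sym2 V → Bool) × (V → Bool) |
        ∃ y, Conn G c.1 x₀ y ∧ c.2 y = true}) p
      = ∑ x : V, ∑ y : V,
          if G.Adj x y then
            jointProb p γ {c : (Sym2 V → Bool) × (V → Bool) |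
              Conn G c.1 x₀ x ∧ (∀ z, Conn G c.1 x₀ z → c.2 z = false) ∧
              (∃ z, Conn G c.1 y z ∧ c.2 z = true)}
          else 0 :=
  magDerivAux G p γ x₀

end
end
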